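/- arXiv:0806.1528 — 8 statements merged into one kernel-verified Lean document; each statement's English description precedes it below -/
import Mathlib

section
/- (Christoffel–Darboux formula for OPUC) For orthonormal polynomials φ_j of a nontrivial probability measure on the unit circle, for all z, ζ with conj(z)ζ ≠ 1: Σ_{j=0}^n conj(φ_j(z)) φ_j(ζ) = (conj(φ_{n+1}*(z)) φ_{n+1}*(ζ) − conj(φ_{n+1}(z)) φ_{n+1}(ζ)) / (1 − conj(z)ζ), where φ_n*(z) = z^n conj(φ_n(1/conj(z))). -/
set_option linter.unusedSectionVars false
set_option linter.unusedVariables false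
set_option maxHeartbeats 1000000

open MeasureTheory Polynomial Finset
open scoped ComplexConjugate

noncomputable section

namespace CDopuc

def B (μ : Measure ℂ) (p q : Polynomial ℂ) : ℂ := ∫ z, conj (p.eval z) * q.eval z ∂μ

def rev (m : ℕ) (p : Polynomial ℂ) : Polynomial ℂ :=
  ∑ k ∈ range (m+1), C (conj (p.coeff k)) * X ^ (m - k)

lemma rev_coeff (m : ℕ) (p : Polynomial ℂ) (j : ℕ) :
    (rev m p).coeff j = if j ≤ m then conj (p.coeff (m - j)) else 0 := by
  rw [rev, finset_sum_coeff]
  by_cases hj : j ≤ m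
  · rw [if_pos hj, Finset.sum_eq_single (m - j)]
    · simp [coeff_C_mul, coeff_X_pow, Nat.sub_sub_self hj]
    · intro k hk hne
      simp only [Finset.mem_range, Nat.lt_succ_iff] at hk
      rw [coeff_C_mul, coeff_X_pow, if_neg (by omega), mul_zero]
    · intro h; exact absurd (Finset.mem_range.mpr (by omega)) h
  · rw [if_neg hj]
    refine Finset.sum_eq_zero fun k hk => ?_
    simp only [Finset.mem_range, Nat.lt_succ_iff] at hk
    rw [coeff_C_mul, coeff_X_pow, if_neg (by omega), mul_zero]

lemma rev_natDegree_le (m : ℕ) (p : Polynomial ℂ) : (rev m p).natDegree ≤ m :=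
  natDegree_le_iff_coeff_eq_zero.mpr fun j hj => by rw [rev_coeff, if_neg (by omega)]

lemma rev_rev (m : ℕ) (p : Polynomial ℂ) (h : p.natDegree ≤ m) : rev m (rev m p) = p := by
  ext j
  rw [rev_coeff]
  by_cases hj : j ≤ m
  · rw [if_pos hj, rev_coeff, if_pos (by omega), Nat.sub_sub_self hj, Complex.conj_conj]
  · rw [if_neg hj]
    exact (coeff_eq_zero_of_natDegree_lt (by omega)).symm

lemma rev_add (m : ℕ) (p q : Polynomial ℂ) : rev m (p + q) = rev m p + rev m q := by
  ext j
  simp only [rev_coeff, coeff_add, map_add]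
  split <;> simp

lemma rev_smul (m : ℕ) (c : ℂ) (p : Polynomial ℂ) : rev m (c • p) = conj c • rev m p := by
  ext j
  simp only [rev_coeff, coeff_smul, smul_eq_mul, map_mul]
  split <;> simp

lemma rev_X_mul (m : ℕ) (p : Polynomial ℂ) (h : p.natDegree ≤ m) :
    rev (m+1) (X * p) = rev m p := by
  ext j
  rw [rev_coeff, rev_coeff]
  by_cases hj : j ≤ m
  · rw [if_pos (by omega), if_pos hj]
    have h1 : m + 1 - j = (m - j) + 1 := by omega
    rw [h1, coeff_X_mul]
  · by_cases hj1 : j = m + 1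
    · rw [if_pos (by omega), if_neg hj, hj1]
      simp [mul_coeff_zero]
    · rw [if_neg (by omega), if_neg hj]

lemma rev_eval (m : ℕ) (p : Polynomial ℂ) (h : p.natDegree ≤ m) {z : ℂ}
    (hz : ‖z‖ = 1) :
    (rev m p).eval z = z ^ m * conj (p.eval z) := by
  have hz1 : z * conj z = 1 := by
    rw [Complex.mul_conj, Complex.normSq_eq_norm_sq, hz]; norm_num
  rw [rev, eval_finset_sum, Polynomial.eval_eq_sum_range' (Nat.lt_succ_of_le h), map_sum,
    Finset.mul_sum]
  refine Finset.sum_congr rfl fun k hk => ?_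
  simp only [Finset.mem_range, Nat.lt_succ_iff] at hk
  rw [eval_mul, eval_C, eval_pow, eval_X, map_mul, map_pow]
  have : z ^ m = z ^ (m - k) * z ^ k := by rw [← pow_add]; congr 1; omega
  rw [this]
  have h2 : z ^ k * (conj z) ^ k = 1 := by rw [← mul_pow, hz1, one_pow]
  calc conj (p.coeff k) * z ^ (m-k)
      = z ^ (m-k) * (z ^ k * (conj z) ^ k) * conj (p.coeff k) := by rw [h2]; ring
    _ = z ^ (m-k) * z ^ k * ((conj z)^k * conj (p.coeff k)) := by ring
    _ = _ := by ring

section Blemmas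

variable {μ : Measure ℂ} [IsProbabilityMeasure μ] (hcirc : ∀ᵐ z ∂μ, ‖z‖ = 1)

include hcirc

lemma integrable_aux (p q : Polynomial ℂ) :
    Integrable (fun z => conj (p.eval z) * q.eval z) μ := by
  have hc : Continuous fun z : ℂ => conj (p.eval z) * q.eval z := by
    exact ((Complex.continuous_conj.comp (Polynomial.continuous p)).mul
      (Polynomial.continuous q))
  refine Integrable.mono' (integrable_const
    ((∑ k ∈ range (p.natDegree+1), ‖p.coeff k‖) * (∑ k ∈ range (q.natDegree+1), ‖q.coeff k‖)))
    hc.aestronglyMeasurable ?_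
  filter_upwards [hcirc] with z hz
  have hb : ∀ r : Polynomial ℂ, ‖r.eval z‖ ≤ ∑ k ∈ range (r.natDegree+1), ‖r.coeff k‖ := by
    intro r
    rw [Polynomial.eval_eq_sum_range]
    refine (norm_sum_le _ _).trans (Finset.sum_le_sum fun k _ => ?_)
    rw [norm_mul, norm_pow, hz, one_pow, mul_one]
  have h0 : (0:ℝ) ≤ ∑ k ∈ range (q.natDegree+1), ‖q.coeff k‖ :=
    Finset.sum_nonneg fun k _ => norm_nonneg _
  rw [norm_mul, RCLike.norm_conj]
  exact mul_le_mul (hb p) (hb q) (norm_nonneg _) ((norm_nonneg _).trans (hb p))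

lemma B_add_left (p p' q : Polynomial ℂ) : B μ (p + p') q = B μ p q + B μ p' q := by
  unfold B
  rw [← integral_add (integrable_aux hcirc p q) (integrable_aux hcirc p' q)]
  congr 1; funext z; rw [eval_add, map_add, add_mul]

lemma B_add_right (p q q' : Polynomial ℂ) : B μ p (q + q') = B μ p q + B μ p q' := by
  unfold B
  rw [← integral_add (integrable_aux hcirc p q) (integrable_aux hcirc p q')]
  congr 1; funext z; rw [eval_add, mul_add]

lemma B_smul_left (c : ℂ) (p q : Polynomial ℂ) : B μ (c • p) q = conj c * B μ p q := by
  unfold B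
  rw [← integral_const_mul]
  congr 1; funext z; rw [eval_smul, smul_eq_mul, map_mul]; ring

lemma B_smul_right (c : ℂ) (p q : Polynomial ℂ) : B μ p (c • q) = c * B μ p q := by
  unfold B
  rw [← integral_const_mul]
  congr 1; funext z; rw [eval_smul, smul_eq_mul]; ring

lemma B_conj (p q : Polynomial ℂ) : B μ p q = conj (B μ q p) := by
  unfold B
  rw [← integral_conj]
  congr 1; funext z; rw [map_mul, Complex.conj_conj]; ring

lemma B_sum_left {ι : Type*} (s : Finset ι) (f : ι → Polynomial ℂ) (q : Polynomial ℂ) :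
    B μ (∑ i ∈ s, f i) q = ∑ i ∈ s, B μ (f i) q := by
  unfold B
  rw [← integral_finset_sum _ (fun i _ => integrable_aux hcirc (f i) q)]
  congr 1; funext z; rw [eval_finset_sum, map_sum, Finset.sum_mul]

lemma B_sum_right {ι : Type*} (s : Finset ι) (f : ι → Polynomial ℂ) (q : Polynomial ℂ) :
    B μ q (∑ i ∈ s, f i) = ∑ i ∈ s, B μ q (f i) := by
  unfold B
  rw [← integral_finset_sum _ (fun i _ => integrable_aux hcirc q (f i))]
  congr 1; funext z; rw [eval_finset_sum, Finset.mul_sum]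

lemma B_X_mul (p q : Polynomial ℂ) : B μ (X * p) (X * q) = B μ p q := by
  unfold B
  refine integral_congr_ae ?_
  filter_upwards [hcirc] with z hz
  have hz1 : conj z * z = 1 := by
    rw [mul_comm, Complex.mul_conj, Complex.normSq_eq_norm_sq, hz]; norm_num
  rw [eval_mul, eval_mul, eval_X, map_mul]
  calc conj z * conj (p.eval z) * (z * q.eval z)
      = (conj z * z) * (conj (p.eval z) * q.eval z) := by ring
    _ = conj (p.eval z) * q.eval z := by rw [hz1, one_mul]

lemma B_rev (m : ℕ) (p q : Polynomial ℂ) (hp : p.natDegree ≤ m) (hq : q.natDegree ≤ m) :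
    B μ (rev m p) (rev m q) = B μ q p := by
  unfold B
  refine integral_congr_ae ?_
  filter_upwards [hcirc] with z hz
  have hz1 : z * conj z = 1 := by
    rw [Complex.mul_conj, Complex.normSq_eq_norm_sq, hz]; norm_num
  rw [rev_eval m p hp hz, rev_eval m q hq hz, map_mul, map_pow, Complex.conj_conj]
  have : z ^ m * (conj z) ^ m = 1 := by rw [← mul_pow, hz1, one_pow]
  calc (conj z) ^ m * p.eval z * (z ^ m * conj (q.eval z))
      = (z ^ m * (conj z) ^ m) * (conj (q.eval z) * p.eval z) := by ring
    _ = conj (q.eval z) * p.eval z := by rw [this, one_mul]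

lemma B_pow_rev (m k : ℕ) (q : Polynomial ℂ) (hq : q.natDegree ≤ m) (hk : k ≤ m) :
    B μ (X ^ k) (rev m q) = conj (B μ (X ^ (m - k)) q) := by
  unfold B
  rw [← integral_conj]
  refine integral_congr_ae ?_
  filter_upwards [hcirc] with z hz
  have hz1 : z * conj z = 1 := by
    rw [Complex.mul_conj, Complex.normSq_eq_norm_sq, hz]; norm_num
  rw [map_mul, Complex.conj_conj, eval_pow, eval_X, eval_pow, eval_X, map_pow,
    rev_eval m q hq hz]
  have h2 : z ^ k * (conj z) ^ k = 1 := by rw [← mul_pow, hz1, one_pow]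
  have h3 : z ^ m = z ^ (m - k) * z ^ k := by rw [← pow_add]; congr 1; omega
  calc (conj z) ^ k * (z ^ m * conj (q.eval z))
      = z ^ (m-k) * (z ^ k * (conj z)^k) * conj (q.eval z) := by rw [h3]; ring
    _ = z ^ (m-k) * conj (q.eval z) := by rw [h2]; ring


lemma B_sub_right (p q r : Polynomial ℂ) : B μ p (q - r) = B μ p q - B μ p r := by
  have h : q - r = q + (-1 : ℂ) • r := by
    rw [neg_one_smul, sub_eq_add_neg]
  rw [h, B_add_right hcirc, B_smul_right hcirc]; ring

end Blemmas

section Main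

variable {μ : Measure ℂ} [IsProbabilityMeasure μ] (hcirc : ∀ᵐ z ∂μ, ‖z‖ = 1)
  (φ : ℕ → Polynomial ℂ) (hdeg : ∀ j, (φ j).natDegree = j)
  (hlead0 : ∀ j, (φ j).leadingCoeff ≠ 0)
  (hortho : ∀ j k, ∫ z, conj ((φ j).eval z) * (φ k).eval z ∂μ = if j = k then 1 else 0)

include hdeg hlead0 in
lemma span_aux :
    ∀ m (p : Polynomial ℂ), p.natDegree ≤ m →
      ∃ c : ℕ → ℂ, p = ∑ j ∈ range (m+1), c j • φ j := by
  intro m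
  induction m with
  | zero =>
    intro p hp
    have h0 : (φ 0).coeff 0 ≠ 0 := by
      have := hlead0 0; rwa [Polynomial.leadingCoeff, hdeg] at this
    set a : ℂ := (φ 0).coeff 0 with ha
    refine ⟨fun _ => p.coeff 0 / a, ?_⟩
    have hp0 : p = C (p.coeff 0) := Polynomial.eq_C_of_natDegree_le_zero hp
    have hφ : φ 0 = C a :=
      Polynomial.eq_C_of_natDegree_le_zero (le_of_eq (hdeg 0))
    rw [Finset.sum_range_one, hφ, Polynomial.smul_C, smul_eq_mul,
      div_mul_cancel₀ _ h0, ← hp0]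
  | succ m ih =>
    intro p hp
    have hκ : (φ (m+1)).coeff (m+1) ≠ 0 := by
      have := hlead0 (m+1); rwa [Polynomial.leadingCoeff, hdeg] at this
    set d : ℂ := p.coeff (m+1) / (φ (m+1)).coeff (m+1) with hd
    have hq : (p - d • φ (m+1)).natDegree ≤ m := by
      refine natDegree_le_iff_coeff_eq_zero.mpr fun N hN => ?_
      rw [coeff_sub, coeff_smul, smul_eq_mul]
      by_cases hN1 : N = m+1
      · subst hN1
        rw [hd, div_mul_cancel₀ _ hκ, sub_self]
      · have h1 : m + 1 < N := by omega
        rw [coeff_eq_zero_of_natDegree_lt (lt_of_le_of_lt hp h1),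
          coeff_eq_zero_of_natDegree_lt (by rw [hdeg]; exact h1), mul_zero, sub_zero]
    obtain ⟨c, hc⟩ := ih _ hq
    refine ⟨fun j => if j = m+1 then d else c j, ?_⟩
    have heq : ∑ j ∈ range (m+1), (if j = m+1 then d else c j) • φ j
        = ∑ j ∈ range (m+1), c j • φ j :=
      Finset.sum_congr rfl fun j hj => by
        rw [if_neg (by simp only [Finset.mem_range] at hj; omega)]
    show p = ∑ j ∈ range (m+1+1), (if j = m+1 then d else c j) • φ j
    rw [Finset.sum_range_succ, if_pos rfl, heq, ← hc, sub_add_cancel]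

include hortho in
lemma hB : ∀ j k, B μ (φ j) (φ k) = if j = k then 1 else 0 := hortho

include hcirc hdeg hlead0 hortho in
lemma B_ortho_of_lt (p : Polynomial ℂ) (m n : ℕ) (hp : p.natDegree ≤ m) (hmn : m < n) :
    B μ p (φ n) = 0 := by
  obtain ⟨c, hc⟩ := span_aux φ hdeg hlead0 m p hp
  rw [hc, B_sum_left hcirc]
  refine Finset.sum_eq_zero fun j hj => ?_
  simp only [Finset.mem_range, Nat.lt_succ_iff] at hj
  rw [B_smul_left hcirc, hB φ hortho, if_neg (by omega), mul_zero]

include hcirc in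
lemma B_expand_left (p t : Polynomial ℂ) :
    B μ p t = ∑ i ∈ range (p.natDegree + 1), conj (p.coeff i) * B μ (X ^ i) t := by
  conv_lhs => rw [Polynomial.as_sum_range' p _ (Nat.lt_succ_self _)]
  rw [B_sum_left hcirc]
  exact Finset.sum_congr rfl fun i _ => by
    rw [← Polynomial.smul_X_eq_monomial, B_smul_left hcirc]

include hcirc hdeg hlead0 hortho in
lemma multiple_of_phi (t : Polynomial ℂ) (m : ℕ) (ht : t.natDegree ≤ m)
    (h0 : ∀ i, i < m → B μ (X ^ i) t = 0) : ∃ c : ℂ, t = c • φ m := by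
  obtain ⟨c, hc⟩ := span_aux φ hdeg hlead0 m t ht
  have hci : ∀ i, i < m → c i = 0 := by
    intro i hi
    have h1 : B μ (φ i) t = c i := by
      rw [hc, B_sum_right hcirc, Finset.sum_eq_single i]
      · rw [B_smul_right hcirc, hB φ hortho, if_pos rfl, mul_one]
      · intro j hj hne
        rw [B_smul_right hcirc, hB φ hortho, if_neg (fun h => hne h.symm), mul_zero]
      · intro h; exact absurd (Finset.mem_range.mpr (by omega)) h
    have h2 : B μ (φ i) t = 0 := by
      rw [B_expand_left hcirc]
      refine Finset.sum_eq_zero fun k hk => ?_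
      simp only [Finset.mem_range, Nat.lt_succ_iff, hdeg] at hk
      rw [h0 k (by omega), mul_zero]
    rw [h1] at h2; exact h2
  refine ⟨c m, ?_⟩
  rw [hc, Finset.sum_range_succ,
    Finset.sum_eq_zero (fun j hj => by
      rw [hci j (Finset.mem_range.mp hj), zero_smul]), zero_add]

variable (hlead : ∀ j, ((φ j).leadingCoeff.im = 0 ∧ 0 < (φ j).leadingCoeff.re))

include hcirc hdeg hlead0 hlead hortho in
lemma szego (m : ℕ) :
    ∃ a b : ℂ, conj b = b ∧ b ≠ 0 ∧ b * b + conj a * a = 1 ∧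
      X * φ m = b • φ (m+1) + a • rev m (φ m) ∧
      rev m (φ m) = b • rev (m+1) (φ (m+1)) + conj a • (X * φ m) := by
  have hκm0 : (φ m).leadingCoeff ≠ 0 := hlead0 m
  have hκ0 : (φ (m+1)).leadingCoeff ≠ 0 := hlead0 (m+1)
  set κm := (φ m).leadingCoeff with hκm
  set κ := (φ (m+1)).leadingCoeff with hκ
  set b : ℂ := κm / κ with hbdef
  have hbconj : conj b = b := by
    have h1 : conj κm = κm := Complex.conj_eq_iff_im.mpr (hlead m).1
    have h2 : conj κ = κ := Complex.conj_eq_iff_im.mpr (hlead (m+1)).1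
    rw [hbdef, map_div₀, h1, h2]
  have hb0 : b ≠ 0 := div_ne_zero hκm0 hκ0
  set s : Polynomial ℂ := X * φ m - b • φ (m+1) with hs
  have hXφdeg : (X * φ m : Polynomial ℂ).natDegree ≤ m + 1 := by
    refine (natDegree_mul_le).trans ?_
    rw [natDegree_X, hdeg]; omega
  have hsdeg : s.natDegree ≤ m := by
    refine natDegree_le_iff_coeff_eq_zero.mpr fun N hN => ?_
    obtain ⟨k, rfl⟩ : ∃ k, N = k + 1 := ⟨N - 1, by omega⟩
    rw [hs, coeff_sub, coeff_smul, smul_eq_mul, coeff_X_mul]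
    by_cases hk : k = m
    · rw [hk]
      have e1 : (φ m).coeff m = κm := by rw [hκm, Polynomial.leadingCoeff, hdeg]
      have e2 : (φ (m+1)).coeff (m+1) = κ := by rw [hκ, Polynomial.leadingCoeff, hdeg]
      rw [e1, e2, hbdef, div_mul_cancel₀ _ hκ0, sub_self]
    · have hm : m < k := by omega
      rw [coeff_eq_zero_of_natDegree_lt (by rw [hdeg]; omega),
        coeff_eq_zero_of_natDegree_lt (by rw [hdeg]; omega), mul_zero, sub_zero]
  have hsorth : ∀ k, 1 ≤ k → k ≤ m → B μ (X ^ k) s = 0 := by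
    intro k h1 h2
    rw [hs, B_sub_right hcirc, B_smul_right hcirc]
    have e1 : B μ (X ^ k) (X * φ m) = 0 := by
      obtain ⟨k', rfl⟩ : ∃ k', k = k' + 1 := ⟨k - 1, by omega⟩
      rw [pow_succ', B_X_mul hcirc]
      exact B_ortho_of_lt hcirc φ hdeg hlead0 hortho _ k' m
        (le_of_eq (natDegree_X_pow k')) (by omega)
    have e2 : B μ (X ^ k) (φ (m+1)) = 0 :=
      B_ortho_of_lt hcirc φ hdeg hlead0 hortho _ k (m+1)
        (le_of_eq (natDegree_X_pow k)) (by omega)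
    rw [e1, e2, mul_zero, sub_zero]
  have htort : ∀ i, i < m → B μ (X ^ i) (rev m s) = 0 := by
    intro i hi
    rw [B_pow_rev hcirc m i s hsdeg (by omega), hsorth (m - i) (by omega) (by omega),
      map_zero]
  obtain ⟨c, hc⟩ := multiple_of_phi hcirc φ hdeg hlead0 hortho (rev m s) m
    (rev_natDegree_le m s) htort
  have hs2 : s = conj c • rev m (φ m) := by
    have h := congrArg (rev m) hc
    rw [rev_rev m s hsdeg, rev_smul] at h
    exact h
  have R1 : X * φ m = b • φ (m+1) + conj c • rev m (φ m) := by
    rw [← hs2, hs]; abel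
  have R2 : rev m (φ m) = b • rev (m+1) (φ (m+1)) + conj (conj c) • (X * φ m) := by
    have h1 : rev (m+1) (X * φ m) = rev m (φ m) := rev_X_mul m (φ m) (le_of_eq (hdeg m))
    have h2 := congrArg (rev (m+1)) R1
    rw [h1, rev_add, rev_smul, rev_smul, hbconj] at h2
    have h3 : rev (m+1) (rev m (φ m)) = X * φ m := by
      rw [← h1, rev_rev (m+1) (X * φ m) hXφdeg]
    rw [h3] at h2
    exact h2
  have hP0 : B μ (rev m (φ m)) (φ (m+1)) = 0 :=
    B_ortho_of_lt hcirc φ hdeg hlead0 hortho _ m (m+1) (rev_natDegree_le m (φ m)) (by omega)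
  have hP0' : B μ (φ (m+1)) (rev m (φ m)) = 0 := by
    rw [B_conj hcirc, hP0, map_zero]
  have hPP : B μ (rev m (φ m)) (rev m (φ m)) = 1 := by
    rw [B_rev hcirc m (φ m) (φ m) (le_of_eq (hdeg m)) (le_of_eq (hdeg m)),
      hB φ hortho, if_pos rfl]
  have hnorm : b * b + conj (conj c) * conj c = 1 := by
    have h1 : B μ (X * φ m) (X * φ m) = 1 := by
      rw [B_X_mul hcirc, hB φ hortho, if_pos rfl]
    rw [R1] at h1
    simp only [B_add_left hcirc, B_add_right hcirc, B_smul_left hcirc,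
      B_smul_right hcirc, hB φ hortho, hP0, hP0', hPP, if_true] at h1
    rw [hbconj] at h1
    linear_combination h1
  exact ⟨conj c, b, hbconj, hb0, hnorm, R1, R2⟩

include hcirc hdeg hlead0 hlead hortho in
lemma diamond (m : ℕ) (z ζ : ℂ) :
    conj ((rev (m+1) (φ (m+1))).eval z) * (rev (m+1) (φ (m+1))).eval ζ
      - conj ((φ (m+1)).eval z) * (φ (m+1)).eval ζ
    = conj ((rev m (φ m)).eval z) * (rev m (φ m)).eval ζ
      - (conj z * ζ) * (conj ((φ m).eval z) * (φ m).eval ζ) := by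
  obtain ⟨a, b, hbc, hb0, hn, R1, R2⟩ := szego hcirc φ hdeg hlead0 hortho hlead m
  have hn' : b * b = 1 - conj a * a := by linear_combination hn
  set A := conj ((rev (m+1) (φ (m+1))).eval z)
  set B1 := (rev (m+1) (φ (m+1))).eval ζ
  set Cc := conj ((φ (m+1)).eval z)
  set D := (φ (m+1)).eval ζ
  set P := conj ((rev m (φ m)).eval z)
  set Q := (rev m (φ m)).eval ζ
  set pz := conj ((φ m).eval z)
  set pζ := (φ m).eval ζ
  have e1 : ζ * pζ = b * D + a * Q := by
    have h := congrArg (Polynomial.eval ζ) R1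
    rw [eval_mul, eval_X, eval_add, eval_smul, eval_smul, smul_eq_mul, smul_eq_mul] at h
    exact h
  have e2 : Q = b * B1 + conj a * (ζ * pζ) := by
    have h := congrArg (Polynomial.eval ζ) R2
    rw [eval_add, eval_smul, eval_smul, smul_eq_mul, smul_eq_mul, eval_mul, eval_X] at h
    exact h
  have e3 : conj z * pz = b * Cc + conj a * P := by
    have h := congrArg (fun w => conj w) (congrArg (Polynomial.eval z) R1)
    simp only [eval_mul, eval_X, eval_add, eval_smul, smul_eq_mul, map_add, map_mul] at h
    rw [hbc] at h
    exact h
  have e4 : P = b * A + a * (conj z * pz) := by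
    have h := congrArg (fun w => conj w) (congrArg (Polynomial.eval z) R2)
    simp only [eval_mul, eval_X, eval_add, eval_smul, smul_eq_mul, map_add, map_mul,
      Complex.conj_conj] at h
    rw [hbc] at h
    exact h
  have hA : A = (P - a * (conj z * pz)) / b := by field_simp; linear_combination -e4
  have hB1 : B1 = (Q - conj a * (ζ * pζ)) / b := by field_simp; linear_combination -e2
  have hC : Cc = ((conj z * pz) - conj a * P) / b := by field_simp; linear_combination -e3
  have hD : D = ((ζ * pζ) - a * Q) / b := by field_simp; linear_combination -e1
  rw [hA, hB1, hC, hD]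
  have hXY : (conj z * pz) * (ζ * pζ) = (conj z * ζ) * (pz * pζ) := by ring
  field_simp
  linear_combination (conj z * ζ * (pz * pζ) - P * Q) * hn' + (conj a * a - 1) * hXY

include hcirc hdeg hlead0 hlead hortho in
lemma cd_key (n : ℕ) (z ζ : ℂ) :
    (1 - conj z * ζ) * ∑ j ∈ range (n+1), conj ((φ j).eval z) * (φ j).eval ζ
      = conj ((rev (n+1) (φ (n+1))).eval z) * (rev (n+1) (φ (n+1))).eval ζ
        - conj ((φ (n+1)).eval z) * (φ (n+1)).eval ζ := by
  induction n with
  | zero =>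
    rw [Finset.sum_range_one, diamond hcirc φ hdeg hlead0 hortho hlead 0 z ζ]
    have h0 : φ 0 = C ((φ 0).coeff 0) := Polynomial.eq_C_of_natDegree_le_zero (le_of_eq (hdeg 0))
    have hr : rev 0 (φ 0) = C (conj ((φ 0).coeff 0)) := by
      rw [rev, Finset.sum_range_one]
      simp
    have he : ∀ w : ℂ, (φ 0).eval w = (φ 0).coeff 0 := fun w => by
      conv_lhs => rw [h0]
      rw [eval_C]
    rw [hr]
    simp only [he, eval_C, Complex.conj_conj]
    ring
  | succ n ih =>
    rw [Finset.sum_range_succ, diamond hcirc φ hdeg hlead0 hortho hlead (n+1) z ζ]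
    linear_combination ih

end Main

end CDopuc

open CDopuc in
/-- Christoffel–Darboux formula for orthonormal polynomials on the unit circle.
Here `φstar m` is the reversed polynomial `φ_m*(z) = z^m conj(φ_m(1/conj z))`,
given by its coefficient formula. -/
theorem cd_formula_opuc
    (μ : Measure ℂ) [IsProbabilityMeasure μ]
    (hcirc : ∀ᵐ z ∂μ, ‖z‖ = 1)
    (φ : ℕ → Polynomial ℂ)
    (hdeg : ∀ j, (φ j).natDegree = j)
    (hlead : ∀ j, ((φ j).leadingCoeff.im = 0 ∧ 0 < (φ j).leadingCoeff.re))
    (hortho : ∀ j k, ∫ z, (starRingEnd ℂ) ((φ j).eval z) * (φ k).eval z ∂μ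
      = if j = k then 1 else 0)
    (φstar : ℕ → ℂ → ℂ)
    (hstar : ∀ m z, φstar m z
      = ∑ k ∈ Finset.range (m + 1), (starRingEnd ℂ) ((φ m).coeff k) * z ^ (m - k))
    (n : ℕ) :
    ∀ z ζ : ℂ, (starRingEnd ℂ) z * ζ ≠ 1 →
      ∑ j ∈ Finset.range (n + 1),
          (starRingEnd ℂ) ((φ j).eval z) * (φ j).eval ζ
        = ((starRingEnd ℂ) (φstar (n + 1) z) * φstar (n + 1) ζ
            - (starRingEnd ℂ) ((φ (n + 1)).eval z) * (φ (n + 1)).eval ζ)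
          / (1 - (starRingEnd ℂ) z * ζ) := by
  intro z ζ hzζ
  have hlead0 : ∀ j, (φ j).leadingCoeff ≠ 0 := fun j h => by
    have h2 := (hlead j).2
    rw [h] at h2
    simp at h2
  have hrev : ∀ m w, φstar m w = (rev m (φ m)).eval w := by
    intro m w
    rw [hstar, rev, eval_finset_sum]
    exact Finset.sum_congr rfl fun k _ => by rw [eval_mul, eval_C, eval_pow, eval_X]
  have hne : (1 : ℂ) - (starRingEnd ℂ) z * ζ ≠ 0 := sub_ne_zero_of_ne (Ne.symm hzζ)
  rw [eq_div_iff hne]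
  have key := cd_key hcirc φ hdeg hlead0 hortho hlead n z ζ
  rw [hrev, hrev]
  linear_combination key
end
end

section
/- All zeros of the orthogonal polynomial p_n are real and simple, and the zeros of p_{n+1} strictly interlace those of p_n: between any two consecutive zeros of p_{n+1} lies exactly one zero of p_n, and p_{n+1} has one zero above the top zero of p_n and one below the bottom zero of p_n. -/
open MeasureTheory Polynomial

lemma eval_factored (L : ℝ) {m : ℕ} (r : Fin m → ℝ) (x : ℝ) :
    Polynomial.eval x (Polynomial.C L * ∏ i : Fin m, (Polynomial.X - Polynomial.C (r i)))
      = L * ∏ i : Fin m, (x - r i) := by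
  simp [Polynomial.eval_prod]

lemma factor_of_roots {m : ℕ} (q : Polynomial ℝ) (hq : q.natDegree = m)
    (hL : q.leadingCoeff ≠ 0) (t : Fin m → ℝ) (ht : Function.Injective t)
    (hroot : ∀ i, q.eval (t i) = 0) :
    q = Polynomial.C q.leadingCoeff * ∏ i : Fin m, (Polynomial.X - Polynomial.C (t i)) := by
  rcases Nat.eq_zero_or_pos m with hm | hm
  · subst hm
    simp only [Finset.univ_eq_empty, Finset.prod_empty, mul_one]
    conv_lhs => rw [Polynomial.eq_C_of_natDegree_eq_zero hq]
    rw [Polynomial.leadingCoeff, hq]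
  · set g : Polynomial ℝ := ∏ i : Fin m, (Polynomial.X - Polynomial.C (t i)) with hgdef
    have hgm : g.Monic := monic_prod_of_monic _ _ (fun i _ => monic_X_sub_C _)
    have hgdeg : g.natDegree = m := by
      rw [hgdef, Polynomial.natDegree_prod _ _ (fun i _ => X_sub_C_ne_zero _)]
      simp
    set d : Polynomial ℝ := q - Polynomial.C q.leadingCoeff * g with hddef
    have hcoeff : d.coeff m = 0 := by
      have h1 : q.coeff m = q.leadingCoeff := by rw [Polynomial.leadingCoeff, hq]
      have h2 : g.coeff m = 1 := by rw [← hgdeg]; exact hgm.coeff_natDegree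
      simp [hddef, Polynomial.coeff_C_mul, h1, h2]
    have hdle : d.natDegree ≤ m := by
      apply le_trans (Polynomial.natDegree_sub_le _ _)
      simp only [max_le_iff]
      constructor
      · exact le_of_eq hq
      · apply le_trans (Polynomial.natDegree_mul_le)
        simp [hgdeg]
    have hd0 : d = 0 := by
      by_contra hd
      have hlt : d.natDegree < m := by
        rcases lt_or_eq_of_le hdle with h | h
        · exact h
        · exfalso
          apply hd
          have := Polynomial.leadingCoeff_ne_zero.mpr hd
          rw [Polynomial.leadingCoeff, h] at this
          exact absurd hcoeff this
      apply hd
      apply Polynomial.eq_zero_of_natDegree_lt_card_of_eval_eq_zero d ht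
      · intro i
        have : g.eval (t i) = 0 := by
          rw [hgdef, Polynomial.eval_prod]
          exact Finset.prod_eq_zero (Finset.mem_univ i) (by simp)
        simp [hddef, hroot i, this]
      · simpa using hlt
    exact sub_eq_zero.mp hd0

lemma prod_sign_neg_pair {m : ℕ} (r : Fin m → ℝ) (x y : ℝ) (k : Fin m)
    (hlow : ∀ j, j < k → r j < x) (hx : x < r k) (hy : r k < y)
    (hhigh : ∀ j, k < j → y < r j) (hxy : x < y) :
    (∏ i : Fin m, (x - r i)) * (∏ i : Fin m, (y - r i)) < 0 := by
  rw [← Finset.prod_mul_distrib,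
    ← Finset.mul_prod_erase Finset.univ _ (Finset.mem_univ k)]
  apply mul_neg_of_neg_of_pos
  · nlinarith
  · apply Finset.prod_pos
    intro j hj
    rcases lt_or_gt_of_ne (Finset.ne_of_mem_erase hj) with h | h
    · have := hlow j h; nlinarith
    · have := hhigh j h; nlinarith

lemma prod_sign_below {m : ℕ} (r : Fin m → ℝ) (x : ℝ) (h : ∀ i, x < r i) :
    0 < (-1 : ℝ) ^ m * ∏ i : Fin m, (x - r i) := by
  have h1 : ∏ i : Fin m, (x - r i) = (-1 : ℝ) ^ m * ∏ i : Fin m, (r i - x) := by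
    calc ∏ i : Fin m, (x - r i) = ∏ i : Fin m, ((-1 : ℝ) * (r i - x)) := by
          apply Finset.prod_congr rfl; intro i _; ring
      _ = (∏ _i : Fin m, (-1 : ℝ)) * ∏ i : Fin m, (r i - x) := Finset.prod_mul_distrib
      _ = (-1 : ℝ) ^ m * ∏ i : Fin m, (r i - x) := by
          rw [Finset.prod_const]; simp
  rw [h1, ← mul_assoc, ← pow_add]
  have h2 : (-1 : ℝ) ^ (m + m) = 1 := by
    rw [show m + m = 2 * m by ring, pow_mul]; norm_num
  rw [h2, one_mul]
  exact Finset.prod_pos (fun i _ => by linarith [h i])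

/-- The zeros of `p_n` are real and simple, and the zeros of `p_{n+1}` strictly
interlace those of `p_n`: between consecutive zeros of `p_{n+1}` there is exactly
one zero of `p_n`, and `p_{n+1}` has a zero above the top zero of `p_n` and one
below the bottom zero. -/
theorem oprl_zeros_real_simple_interlace
    (μ : Measure ℝ)
    (hmom : ∀ k : ℕ, Integrable (fun t => |t| ^ k) μ)
    (a b : ℕ → ℝ)
    (ha : ∀ m, 0 < a m)
    (p : ℕ → Polynomial ℝ)
    (hdeg : ∀ j, (p j).natDegree = j)
    (hlead : ∀ j, 0 < (p j).leadingCoeff)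
    (hortho : ∀ j k, ∫ t, (p j).eval t * (p k).eval t ∂μ = if j = k then 1 else 0)
    (hrec0 : Polynomial.X * p 0 = Polynomial.C (a 1) * p 1 + Polynomial.C (b 1) * p 0)
    (hrec : ∀ m, Polynomial.X * p (m + 1)
      = Polynomial.C (a (m + 2)) * p (m + 2) + Polynomial.C (b (m + 2)) * p (m + 1)
        + Polynomial.C (a (m + 1)) * p m)
    (n : ℕ) :
    ∃ (r : Fin n → ℝ) (s : Fin (n + 1) → ℝ),
      StrictMono r ∧ StrictMono s ∧
      p n = Polynomial.C ((p n).leadingCoeff)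
        * ∏ i : Fin n, (Polynomial.X - Polynomial.C (r i)) ∧
      p (n + 1) = Polynomial.C ((p (n + 1)).leadingCoeff)
        * ∏ i : Fin (n + 1), (Polynomial.X - Polynomial.C (s i)) ∧
      ∀ i : Fin n, s i.castSucc < r i ∧ r i < s i.succ := by
  induction n with
  | zero =>
    refine ⟨fun i => i.elim0, fun _ => -((p 1).coeff 0) / (p 1).coeff 1,
      fun i => i.elim0, ?_, ?_, ?_, fun i => i.elim0⟩
    · intro i j h
      rw [Fin.lt_def] at h
      have h1 := i.isLt
      have h2 := j.isLt
      omega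
    · exact factor_of_roots (p 0) (hdeg 0) (ne_of_gt (hlead 0))
        (fun i => i.elim0) (fun i => i.elim0) (fun i => i.elim0)
    · apply factor_of_roots (p 1) (hdeg 1) (ne_of_gt (hlead 1)) _
        (fun i j _ => by have h1 := i.isLt; have h2 := j.isLt; exact Fin.ext (by omega))
      intro i
      have hc1 : (p 1).coeff 1 = (p 1).leadingCoeff := by
        rw [Polynomial.leadingCoeff, hdeg 1]
      have hne : (p 1).coeff 1 ≠ 0 := by rw [hc1]; exact ne_of_gt (hlead 1)
      have hrep : p 1 = Polynomial.C ((p 1).coeff 1) * Polynomial.X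
          + Polynomial.C ((p 1).coeff 0) := by
        apply Polynomial.eq_X_add_C_of_degree_le_one
        apply le_trans (Polynomial.degree_le_natDegree)
        rw [hdeg 1]
        exact_mod_cast le_refl _
      rw [congrArg (Polynomial.eval _) hrep]
      simp only [Polynomial.eval_add, Polynomial.eval_mul, Polynomial.eval_C,
        Polynomial.eval_X]
      field_simp
      ring
  | succ n ih =>
    obtain ⟨r, s, hr, hs, hfr, hfs, hint⟩ := ih
    have hL2 : 0 < (p (n+2)).leadingCoeff := hlead (n+2)
    have hdq : (p (n+2)).natDegree = n + 2 := hdeg (n+2)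
    -- order facts between r and s
    have hrs1 : ∀ (i : Fin (n+1)) (j : Fin n), (j : ℕ) < (i : ℕ) → r j < s i := by
      intro i j hji
      have h1 : r j < s j.succ := (hint j).2
      have h2 : s j.succ ≤ s i := hs.monotone (by rw [Fin.le_def]; simpa using hji)
      linarith
    have hrs2 : ∀ (i : Fin (n+1)) (j : Fin n), (i : ℕ) ≤ (j : ℕ) → s i < r j := by
      intro i j hij
      have h1 : s i ≤ s j.castSucc := hs.monotone (by rw [Fin.le_def]; simpa using hij)
      have h2 : s j.castSucc < r j := (hint j).1
      linarith
    -- evaluation of p n at the zeros of p (n+1)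
    have hPval : ∀ i : Fin (n+1), (p n).eval (s i)
        = (p n).leadingCoeff * ∏ j : Fin n, (s i - r j) := by
      intro i
      conv_lhs => rw [hfr]
      exact eval_factored _ _ _
    have hPlast : 0 < (p n).eval (s (Fin.last n)) := by
      rw [hPval]
      apply mul_pos (hlead n)
      apply Finset.prod_pos
      intro j _
      have := hrs1 (Fin.last n) j (by rw [Fin.val_last]; exact j.isLt)
      linarith
    have hPpair : ∀ i : Fin n, (p n).eval (s i.castSucc) * (p n).eval (s i.succ) < 0 := by
      intro i
      rw [hPval, hPval]
      have hAB : (∏ j : Fin n, (s i.castSucc - r j)) * (∏ j : Fin n, (s i.succ - r j)) < 0 := by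
        apply prod_sign_neg_pair r _ _ i
        · intro j hj
          rw [Fin.lt_def] at hj
          exact hrs1 i.castSucc j (by rw [Fin.coe_castSucc]; exact hj)
        · exact (hint i).1
        · exact (hint i).2
        · intro j hj
          apply hrs2 i.succ j
          rw [Fin.lt_def] at hj
          simp [Fin.val_succ]
          omega
        · exact hs (Fin.castSucc_lt_succ (i := i))
      nlinarith [hlead n, hAB, mul_pos (hlead n) (hlead n)]
    have hP0 : 0 < (-1:ℝ)^n * (p n).eval (s 0) := by
      rw [hPval]
      have hbelow := prod_sign_below r (s 0) (fun j => hrs2 0 j (by simp))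
      nlinarith [hlead n]
    -- p (n+1) vanishes at the s i
    have hps : ∀ i : Fin (n+1), (p (n+1)).eval (s i) = 0 := by
      intro i
      conv_lhs => rw [hfs]
      rw [eval_factored]
      exact mul_eq_zero_of_right _
        (Finset.prod_eq_zero (Finset.mem_univ i) (by simp))
    -- recurrence relation at the s i
    have hrel : ∀ i : Fin (n+1), a (n+2) * (p (n+2)).eval (s i)
        = -(a (n+1)) * (p n).eval (s i) := by
      intro i
      have h := congrArg (Polynomial.eval (s i)) (hrec n)
      simp only [Polynomial.eval_mul, Polynomial.eval_add, Polynomial.eval_C,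
        Polynomial.eval_X, hps i, mul_zero] at h
      linarith
    -- sign facts for p (n+2) at the s i
    have hQlast : (p (n+2)).eval (s (Fin.last n)) < 0 := by
      have h := hrel (Fin.last n)
      nlinarith [ha (n+2), ha (n+1), hPlast]
    have hQpair : ∀ i : Fin n,
        (p (n+2)).eval (s i.castSucc) * (p (n+2)).eval (s i.succ) < 0 := by
      intro i
      have h1 := hrel i.castSucc
      have h2 := hrel i.succ
      have key : (a (n+2) * a (n+2)) *
            ((p (n+2)).eval (s i.castSucc) * (p (n+2)).eval (s i.succ))
          = (a (n+1) * a (n+1)) *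
            ((p n).eval (s i.castSucc) * (p n).eval (s i.succ)) := by
        calc (a (n+2) * a (n+2)) *
              ((p (n+2)).eval (s i.castSucc) * (p (n+2)).eval (s i.succ))
            = (a (n+2) * (p (n+2)).eval (s i.castSucc))
              * (a (n+2) * (p (n+2)).eval (s i.succ)) := by ring
          _ = (-(a (n+1)) * (p n).eval (s i.castSucc))
              * (-(a (n+1)) * (p n).eval (s i.succ)) := by rw [h1, h2]
          _ = _ := by ring
      nlinarith [mul_pos (ha (n+2)) (ha (n+2)), mul_pos (ha (n+1)) (ha (n+1)), hPpair i]
    have hQ0 : (-1:ℝ)^n * (p (n+2)).eval (s 0) < 0 := by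
      have h := hrel 0
      have h' : a (n+2) * ((-1:ℝ)^n * (p (n+2)).eval (s 0))
          = -(a (n+1)) * ((-1:ℝ)^n * (p n).eval (s 0)) := by
        linear_combination ((-1:ℝ)^n) * h
      nlinarith [ha (n+2), ha (n+1), hP0]
    -- root above the top zero
    have htop : ∃ x, s (Fin.last n) < x ∧ (p (n+2)).eval x = 0 := by
      have hdegpos : 0 < (p (n+2)).degree :=
        Polynomial.natDegree_pos_iff_degree_pos.mp (by omega)
      have htt : Filter.Tendsto (fun x => (p (n+2)).eval x) Filter.atTop Filter.atTop :=
        Polynomial.tendsto_atTop_of_leadingCoeff_nonneg _ hdegpos (le_of_lt hL2)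
      obtain ⟨xT, hxT1, hxT2⟩ := ((htt.eventually_ge_atTop 1).and
        (Filter.eventually_ge_atTop (s (Fin.last n) + 1))).exists
      have hlt : s (Fin.last n) < xT := by linarith
      obtain ⟨x, hx, hx0⟩ := intermediate_value_Ioo (f := fun x => (p (n+2)).eval x)
        (le_of_lt hlt) ((Polynomial.continuous _).continuousOn)
        (Set.mem_Ioo.mpr ⟨hQlast, by linarith⟩)
      exact ⟨x, hx.1, hx0⟩
    -- root below the bottom zero
    have hbot : ∃ x, x < s 0 ∧ (p (n+2)).eval x = 0 := by
      have hpowne : ((-1:ℝ)^n) ≠ 0 := pow_ne_zero _ (by norm_num)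
      set g : Polynomial ℝ := Polynomial.C ((-1:ℝ)^n) * (p (n+2)).comp (-Polynomial.X)
        with hgdef
      have hgeval : ∀ y, g.eval y = (-1:ℝ)^n * (p (n+2)).eval (-y) := by
        intro y; simp [hgdef, Polynomial.eval_comp]
      have hXdeg : ((-Polynomial.X : Polynomial ℝ)).natDegree = 1 := by simp
      have hpow : (-1:ℝ)^n * (-1:ℝ)^(n+2) = 1 := by
        rw [← pow_add, show n + (n+2) = 2 * (n+1) by ring, pow_mul]
        norm_num
      have hglead : g.leadingCoeff = (p (n+2)).leadingCoeff := by
        rw [hgdef, Polynomial.leadingCoeff_mul, Polynomial.leadingCoeff_C,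
          Polynomial.leadingCoeff_comp (by rw [hXdeg]; norm_num)]
        have hX : ((-Polynomial.X : Polynomial ℝ)).leadingCoeff = -1 := by simp
        rw [hX, hdq]
        linear_combination ((p (n+2)).leadingCoeff) * hpow
      have hgdeg : g.natDegree = n + 2 := by
        rw [hgdef, Polynomial.natDegree_C_mul hpowne, Polynomial.natDegree_comp,
          hdq, hXdeg, mul_one]
      have hgt : Filter.Tendsto (fun x => g.eval x) Filter.atTop Filter.atTop :=
        Polynomial.tendsto_atTop_of_leadingCoeff_nonneg _
          (Polynomial.natDegree_pos_iff_degree_pos.mp (by omega))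
          (by rw [hglead]; exact le_of_lt hL2)
      obtain ⟨y, hy1, hy2⟩ := ((hgt.eventually_ge_atTop 1).and
        (Filter.eventually_ge_atTop (-(s 0) + 1))).exists
      have hfy : (1:ℝ) ≤ (-1:ℝ)^n * (p (n+2)).eval (-y) := by rw [← hgeval]; exact hy1
      have hyy : -y < s 0 := by linarith
      obtain ⟨x, hx, hx0⟩ := intermediate_value_Ioo'
        (f := fun x => (-1:ℝ)^n * (p (n+2)).eval x) (le_of_lt hyy)
        ((continuous_const.mul (Polynomial.continuous _)).continuousOn)
        (Set.mem_Ioo.mpr ⟨by show (-1:ℝ)^n * (p (n+2)).eval (s 0) < (0:ℝ); exact hQ0, by show ((0:ℝ)) < (-1:ℝ)^n * (p (n+2)).eval (-y); linarith⟩)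
      refine ⟨x, hx.2, ?_⟩
      have hx0' : (-1:ℝ)^n * (p (n+2)).eval x = 0 := hx0
      rcases mul_eq_zero.mp hx0' with h | h
      · exact absurd h hpowne
      · exact h
    -- roots in between
    have hmid : ∀ i : Fin n, ∃ x, s i.castSucc < x ∧ x < s i.succ
        ∧ (p (n+2)).eval x = 0 := by
      intro i
      have hlt : s i.castSucc < s i.succ := hs (Fin.castSucc_lt_succ (i := i))
      rcases lt_or_ge ((p (n+2)).eval (s i.castSucc)) 0 with hc | hc
      · have hsucc : 0 < (p (n+2)).eval (s i.succ) := by nlinarith [hQpair i]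
        obtain ⟨x, hx, hx0⟩ := intermediate_value_Ioo (f := fun x => (p (n+2)).eval x)
          (le_of_lt hlt) ((Polynomial.continuous _).continuousOn)
          (Set.mem_Ioo.mpr ⟨hc, hsucc⟩)
        exact ⟨x, hx.1, hx.2, hx0⟩
      · have hc' : 0 < (p (n+2)).eval (s i.castSucc) := by
          rcases lt_or_eq_of_le hc with h | h
          · exact h
          · exfalso
            have hcontra := hQpair i
            rw [← h] at hcontra
            simp at hcontra
        have hsucc : (p (n+2)).eval (s i.succ) < 0 := by nlinarith [hQpair i]
        obtain ⟨x, hx, hx0⟩ := intermediate_value_Ioo' (f := fun x => (p (n+2)).eval x)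
          (le_of_lt hlt) ((Polynomial.continuous _).continuousOn)
          (Set.mem_Ioo.mpr ⟨hsucc, hc'⟩)
        exact ⟨x, hx.1, hx.2, hx0⟩
    choose xm hxm1 hxm2 hxm3 using hmid
    obtain ⟨xB, hxB1, hxB2⟩ := hbot
    obtain ⟨xT, hxT1, hxT2⟩ := htop
    set t : Fin (n+2) → ℝ := fun k =>
      if h0 : (k:ℕ) = 0 then xB
      else if h1 : (k:ℕ) < n + 1 then xm ⟨(k:ℕ) - 1, by omega⟩ else xT with htdef
    have htval0 : t 0 = xB := by simp [htdef]
    have htvalm : ∀ (j : ℕ) (hj : j < n), t ⟨j + 1, by omega⟩ = xm ⟨j, hj⟩ := by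
      intro j hj
      simp only [htdef]
      rw [dif_neg (by simp), dif_pos (by simp; omega)]
      exact congrArg xm (Fin.ext (by simp))
    have htvalT : t (Fin.last (n+1)) = xT := by
      simp only [htdef]
      rw [dif_neg (by simp), dif_neg (by simp)]
    have hinter : ∀ i : Fin (n+1), t i.castSucc < s i ∧ s i < t i.succ := by
      intro i
      constructor
      · rcases Nat.eq_zero_or_pos (i:ℕ) with h0 | h0
        · have e : i.castSucc = (0 : Fin (n+2)) := Fin.ext (by simp [h0])
          rw [e, htval0, show i = (0 : Fin (n+1)) from Fin.ext h0]
          exact hxB1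
        · have hj : (i:ℕ) - 1 < n := by omega
          have e : i.castSucc = (⟨(i:ℕ) - 1 + 1, by omega⟩ : Fin (n+2)) :=
            Fin.ext (by simp; omega)
          rw [e, htvalm _ hj]
          have h2 := hxm2 ⟨(i:ℕ) - 1, hj⟩
          have e2 : (⟨(i:ℕ) - 1, hj⟩ : Fin n).succ = i :=
            Fin.ext (by simp [Fin.val_succ]; omega)
          rwa [e2] at h2
      · rcases lt_or_ge ((i:ℕ)) n with hc | hc
        · have e : i.succ = (⟨(i:ℕ) + 1, by omega⟩ : Fin (n+2)) :=
            Fin.ext (by simp [Fin.val_succ])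
          rw [e, htvalm _ hc]
          have h1 := hxm1 ⟨(i:ℕ), hc⟩
          have e2 : (⟨(i:ℕ), hc⟩ : Fin n).castSucc = i := Fin.ext (by simp)
          rwa [e2] at h1
        · have hin : (i:ℕ) = n := by omega
          have e : i.succ = Fin.last (n+1) := Fin.ext (by simp [Fin.val_succ]; omega)
          rw [e, htvalT, show i = Fin.last n from Fin.ext (by simp [hin])]
          exact hxT1
    have hts : StrictMono t := by
      rw [Fin.strictMono_iff_lt_succ]
      intro j
      exact (hinter j).1.trans (hinter j).2
    have hroots : ∀ k : Fin (n+2), (p (n+2)).eval (t k) = 0 := by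
      intro k
      rcases Nat.eq_zero_or_pos (k:ℕ) with h0 | h0
      · rw [show k = (0 : Fin (n+2)) from Fin.ext h0, htval0]
        exact hxB2
      · rcases lt_or_ge ((k:ℕ)) (n+1) with hc | hc
        · have hj : (k:ℕ) - 1 < n := by omega
          rw [show k = (⟨(k:ℕ) - 1 + 1, by omega⟩ : Fin (n+2)) from Fin.ext (by simp; omega),
            htvalm _ hj]
          exact hxm3 _
        · rw [show k = Fin.last (n+1) from Fin.ext (by simp; omega), htvalT]
          exact hxT2
    have hfq : p (n+2) = Polynomial.C ((p (n+2)).leadingCoeff)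
        * ∏ k : Fin (n+2), (Polynomial.X - Polynomial.C (t k)) :=
      factor_of_roots _ hdq (ne_of_gt hL2) t hts.injective hroots
    exact ⟨s, t, hs, hts, hfs, hfq, hinter⟩
end

section
/- Let μ be a nontrivial measure on ℂ with finite moments, π_{n−1} the orthogonal projection in L²(μ) onto polynomials of degree ≤ n−1, and K_{n;F} = π_{n−1} M_z π_{n−1} restricted to ran(π_{n−1}), where M_z is multiplication by z. Then det(z·1 − K_{n;F}) = X_n(z), the monic orthogonal polynomial of degree n. -/
open MeasureTheory Polynomial

section Aux
variable (μ : Measure ℂ)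

lemma op_integrable_pow (hmom : ∀ k : ℕ, Integrable (fun z => ‖z‖ ^ k) μ) (a b : ℕ) :
    Integrable (fun z : ℂ => (starRingEnd ℂ) z ^ a * z ^ b) μ := by
  apply (hmom (a + b)).mono'
  · exact (((Complex.continuous_conj.pow a).mul (continuous_id.pow b))).aestronglyMeasurable
  · refine Filter.Eventually.of_forall fun z => ?_
    simp [pow_add, norm_mul, norm_pow]

lemma op_integrable_pair (hmom : ∀ k : ℕ, Integrable (fun z => ‖z‖ ^ k) μ) (p q : Polynomial ℂ) :
    Integrable (fun z : ℂ => (starRingEnd ℂ) (p.eval z) * q.eval z) μ := by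
  have h : (fun z : ℂ => (starRingEnd ℂ) (p.eval z) * q.eval z)
      = fun z => ∑ a ∈ Finset.range (p.natDegree + 1), ∑ b ∈ Finset.range (q.natDegree + 1),
          ((starRingEnd ℂ) (p.coeff a) * q.coeff b) * ((starRingEnd ℂ) z ^ a * z ^ b) := by
    funext z
    rw [eval_eq_sum_range, eval_eq_sum_range, map_sum, Finset.sum_mul_sum]
    refine Finset.sum_congr rfl fun a _ => Finset.sum_congr rfl fun b _ => ?_
    simp only [map_mul, map_pow]
    ring
  rw [h]
  refine integrable_finset_sum _ fun a _ => integrable_finset_sum _ fun b _ => ?_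
  exact (op_integrable_pow μ hmom a b).const_mul _

end Aux

section Aux2
variable (μ : Measure ℂ)

noncomputable def innerP (p q : Polynomial ℂ) : ℂ :=
  ∫ z, (starRingEnd ℂ) (p.eval z) * q.eval z ∂μ

variable (hmom : ∀ k : ℕ, Integrable (fun z => ‖z‖ ^ k) μ)
include hmom

lemma op_integrable_powpair (a : ℕ) (q : Polynomial ℂ) :
    Integrable (fun z : ℂ => (starRingEnd ℂ) z ^ a * q.eval z) μ := by
  have h := op_integrable_pair μ hmom (X ^ a) q
  simp only [eval_pow, eval_X, map_pow] at h
  exact h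

omit hmom in
lemma innerP_smul (c : ℂ) (p q : Polynomial ℂ) :
    innerP μ p (C c * q) = c * innerP μ p q := by
  unfold innerP
  rw [← integral_const_mul]
  simp only [eval_mul, eval_C]
  congr 1; funext z; ring

lemma innerP_sub (p q r : Polynomial ℂ) :
    innerP μ p (q - r) = innerP μ p q - innerP μ p r := by
  unfold innerP
  rw [← integral_sub (op_integrable_pair μ hmom p q) (op_integrable_pair μ hmom p r)]
  simp only [eval_sub]
  congr 1; funext z; ring

lemma innerP_sum {ι : Type*} (s : Finset ι) (p : Polynomial ℂ) (f : ι → Polynomial ℂ) :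
    innerP μ p (∑ i ∈ s, f i) = ∑ i ∈ s, innerP μ p (f i) := by
  unfold innerP
  rw [← integral_finset_sum s (fun i _ => op_integrable_pair μ hmom p (f i))]
  simp only [eval_finset_sum, Finset.mul_sum]

lemma innerP_left_expand (p q : Polynomial ℂ) :
    innerP μ p q = ∑ a ∈ Finset.range (p.natDegree + 1),
      (starRingEnd ℂ) (p.coeff a) * ∫ z, (starRingEnd ℂ) z ^ a * q.eval z ∂μ := by
  unfold innerP
  have h : (fun z : ℂ => (starRingEnd ℂ) (p.eval z) * q.eval z)
      = fun z => ∑ a ∈ Finset.range (p.natDegree + 1),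
          (starRingEnd ℂ) (p.coeff a) * ((starRingEnd ℂ) z ^ a * q.eval z) := by
    funext z
    rw [eval_eq_sum_range (p := p), map_sum, Finset.sum_mul]
    refine Finset.sum_congr rfl fun a _ => ?_
    simp only [map_mul, map_pow]; ring
  rw [h, integral_finset_sum]
  · exact Finset.sum_congr rfl fun a _ => integral_const_mul _ _
  · exact fun a _ => (op_integrable_powpair μ hmom a q).const_mul _
end Aux2

/-- The characteristic polynomial of the truncated multiplication operator
`K_{n;F} = π_{n−1} M_z π_{n−1}` (expressed as a matrix in the orthonormal
polynomial basis `x_0, …, x_{n−1}` of `ran π_{n−1}`) is the monic orthogonal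
polynomial `X_n`. -/
theorem charpoly_truncated_Mz_eq_monic_OP
    (μ : Measure ℂ)
    (hmom : ∀ k : ℕ, Integrable (fun z => ‖z‖ ^ k) μ)
    (x : ℕ → Polynomial ℂ)
    (hdeg : ∀ j, (x j).natDegree = j)
    (hortho : ∀ j k, ∫ z, (starRingEnd ℂ) ((x j).eval z) * (x k).eval z ∂μ
      = if j = k then 1 else 0)
    (n : ℕ)
    (Xp : Polynomial ℂ)
    (hXmonic : Xp.Monic)
    (hXdeg : Xp.natDegree = n)
    (hXorth : ∀ j < n, ∫ z, (starRingEnd ℂ) z ^ j * Xp.eval z ∂μ = 0)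
    (A : Matrix (Fin n) (Fin n) ℂ)
    (hA : ∀ j k : Fin n, A j k
      = ∫ z, (starRingEnd ℂ) ((x (j : ℕ)).eval z) * (z * (x (k : ℕ)).eval z) ∂μ) :
    A.charpoly = Xp := by
  classical
  rcases Nat.eq_zero_or_pos n with hn0 | hn
  · subst hn0
    have h1 : A.charpoly = 1 := Matrix.det_fin_zero
    rw [h1]
    exact ((Polynomial.Monic.natDegree_eq_zero hXmonic).mp hXdeg).symm
  -- basic facts
  have hxne : ∀ j, x j ≠ 0 := by
    intro j h
    have h0 := hortho j j
    rw [h] at h0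
    simp at h0
  have hlead : ∀ j, (x j).coeff j ≠ 0 := by
    intro j
    have h := Polynomial.leadingCoeff_ne_zero.mpr (hxne j)
    rwa [Polynomial.leadingCoeff, hdeg j] at h
  have hxdeg : ∀ j, (x j).degree = (j : ℕ) := by
    intro j
    rw [Polynomial.degree_eq_natDegree (hxne j), hdeg j]
  -- span
  have hspan : ∀ d : ℕ, d ≤ n → ∀ r : Polynomial ℂ, r.degree < (d : ℕ) →
      r ∈ Submodule.span ℂ (Set.range fun j : Fin n => x (j : ℕ)) := by
    intro d
    induction d with
    | zero =>
      intro _ r hr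
      have hr0 : r = 0 := by
        by_contra hne
        have := Polynomial.zero_le_degree_iff.mpr hne
        rw [Nat.cast_zero] at hr
        exact absurd hr (not_lt.mpr this)
      rw [hr0]
      exact Submodule.zero_mem _
    | succ d ih =>
      intro hdn r hr
      have hd : d ≤ n := Nat.le_of_succ_le hdn
      have hdlt : d < n := hdn
      set c := r.coeff d / (x d).coeff d with hc
      have hr' : (r - C c * x d).degree < (d : ℕ) := by
        rw [Polynomial.degree_lt_iff_coeff_zero]
        intro m hm
        rw [Polynomial.coeff_sub, Polynomial.coeff_C_mul]
        rcases eq_or_lt_of_le hm with hmd | hmd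
        · rw [← hmd, hc, div_mul_cancel₀ _ (hlead d), sub_self]
        · have h1 : r.coeff m = 0 := by
            refine Polynomial.coeff_eq_zero_of_degree_lt (lt_of_lt_of_le hr ?_)
            exact_mod_cast hmd
          have h2 : (x d).coeff m = 0 := by
            refine Polynomial.coeff_eq_zero_of_degree_lt (lt_of_le_of_lt (le_of_eq (hxdeg d)) ?_)
            exact_mod_cast hmd
          rw [h1, h2, mul_zero, sub_zero]
      have hmem := ih hd (r - C c * x d) hr'
      have hxd : x d ∈ Set.range fun j : Fin n => x (j : ℕ) := ⟨⟨d, hdlt⟩, rfl⟩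
      have hrw : r = (r - C c * x d) + c • (x d) := by
        rw [Polynomial.smul_eq_C_mul]
        ring
      rw [hrw]
      exact Submodule.add_mem _ hmem (Submodule.smul_mem _ _ (Submodule.subset_span hxd))
  -- expansion
  have hexp : ∀ r : Polynomial ℂ, r.degree < (n : ℕ) →
      r = ∑ j : Fin n, C (innerP μ (x (j : ℕ)) r) * x (j : ℕ) := by
    intro r hr
    obtain ⟨c, hc⟩ := Submodule.mem_span_range_iff_exists_fun ℂ |>.mp (hspan n le_rfl r hr)
    simp_rw [Polynomial.smul_eq_C_mul] at hc
    have hcoef : ∀ j : Fin n, innerP μ (x (j : ℕ)) r = c j := by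
      intro j
      rw [← hc, innerP_sum μ hmom]
      have hterm : ∀ i : Fin n, innerP μ (x (j : ℕ)) (C (c i) * x (i : ℕ))
          = c i * (if (j : ℕ) = (i : ℕ) then 1 else 0) := by
        intro i
        rw [innerP_smul]
        congr 1
        exact hortho (j : ℕ) (i : ℕ)
      simp_rw [hterm, Fin.val_eq_val, mul_ite, mul_one, mul_zero, eq_comm]
      simp
    simp_rw [hcoef]
    exact hc.symm
  -- orthogonality of Xp to x j
  have hinnerXp : ∀ j, j < n → innerP μ (x j) Xp = 0 := by
    intro j hj
    rw [innerP_left_expand μ hmom]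
    refine Finset.sum_eq_zero fun a ha => ?_
    rw [hdeg j] at ha
    rw [hXorth a (lt_of_lt_of_le (Finset.mem_range.mp ha) hj), mul_zero]
  -- inner products with X * x k
  have hinnerMul : ∀ j k : Fin n, innerP μ (x (j : ℕ)) (X * x (k : ℕ)) = A j k := by
    intro j k
    rw [hA j k]
    simp only [innerP, eval_mul, eval_X]
  -- key recurrence
  have hkey : ∀ k : Fin n, X * x (k : ℕ) = (∑ j : Fin n, C (A j k) * x (j : ℕ)) +
      (if (k : ℕ) + 1 = n then C ((x (k : ℕ)).coeff (k : ℕ)) * Xp else 0) := by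
    intro k
    by_cases hk : (k : ℕ) + 1 = n
    · rw [if_pos hk]
      set lam := (x (k : ℕ)).coeff (k : ℕ) with hlam
      have hdeg1 : (X * x (k : ℕ) - C lam * Xp).degree < ((n : ℕ) : WithBot ℕ) := by
        rw [Polynomial.degree_lt_iff_coeff_zero]
        intro m hm
        rw [Polynomial.coeff_sub, Polynomial.coeff_C_mul]
        rcases eq_or_lt_of_le hm with hmn | hmn
        · have hm' : m = (k : ℕ) + 1 := by omega
          subst hm'
          rw [Polynomial.coeff_X_mul]
          have hXpc : Xp.coeff ((k : ℕ) + 1) = 1 := by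
            rw [hk, ← hXdeg]
            exact hXmonic.coeff_natDegree
          rw [hXpc, mul_one, sub_self]
        · have h1 : (X * x (k : ℕ)).coeff m = 0 := by
            refine Polynomial.coeff_eq_zero_of_natDegree_lt ?_
            have := Polynomial.natDegree_mul_le (p := (X : Polynomial ℂ)) (q := x (k : ℕ))
            rw [Polynomial.natDegree_X, hdeg (k : ℕ)] at this
            omega
          have h2 : Xp.coeff m = 0 := by
            refine Polynomial.coeff_eq_zero_of_natDegree_lt ?_
            omega
          rw [h1, h2, mul_zero, sub_zero]
      have hexp1 := hexp _ hdeg1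
      have hco : ∀ j : Fin n, innerP μ (x (j : ℕ)) (X * x (k : ℕ) - C lam * Xp) = A j k := by
        intro j
        rw [innerP_sub μ hmom, innerP_smul, hinnerXp (j : ℕ) j.isLt, mul_zero, sub_zero,
          hinnerMul j k]
      simp_rw [hco] at hexp1
      linear_combination hexp1
    · have hklt : (k : ℕ) + 1 < n := by
        have := k.isLt
        omega
      rw [if_neg hk, add_zero]
      have hdeg1 : (X * x (k : ℕ)).degree < ((n : ℕ) : WithBot ℕ) := by
        rw [Polynomial.degree_mul, Polynomial.degree_X, hxdeg (k : ℕ)]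
        have h1k : (1 + (k : ℕ)) < n := by omega
        exact_mod_cast h1k
      have hexp1 := hexp _ hdeg1
      have hco : ∀ j : Fin n, innerP μ (x (j : ℕ)) (X * x (k : ℕ)) = A j k := fun j => hinnerMul j k
      simp_rw [hco] at hexp1
      exact hexp1
  -- matrix computation
  set w : Fin n → Polynomial ℂ := fun j => x (j : ℕ) with hw
  set M : Matrix (Fin n) (Fin n) (Polynomial ℂ) := Matrix.charmatrix A.transpose with hMdef
  have hM : M.mulVec w = fun k : Fin n =>
      if (k : ℕ) + 1 = n then C ((x (k : ℕ)).coeff (k : ℕ)) * Xp else 0 := by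
    funext k
    have hMk : ∀ j : Fin n, M k j = (if k = j then X else 0) - C (A j k) := by
      intro j
      rw [hMdef, Matrix.charmatrix_apply]
      by_cases h : k = j <;>
        simp [Matrix.transpose_apply, Matrix.diagonal_apply, h]
    have h1 : M.mulVec w k = ∑ j : Fin n, M k j * w j := rfl
    rw [h1]
    simp_rw [hMk, sub_mul, ite_mul, zero_mul]
    rw [Finset.sum_sub_distrib, Finset.sum_ite_eq, if_pos (Finset.mem_univ k)]
    show X * x (k : ℕ) - ∑ j : Fin n, C (A j k) * x (j : ℕ) = _
    rw [hkey k]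
    ring
  have hMdet : M.det = A.charpoly := by
    have : Matrix.charmatrix A.transpose = (Matrix.charmatrix A).transpose := by
      ext i j
      by_cases h : i = j
      · subst h
        simp [Matrix.charmatrix_apply]
      · simp [Matrix.charmatrix_apply, Matrix.transpose_apply, Matrix.diagonal_apply, h,
          Ne.symm h]
    rw [hMdef, this, Matrix.det_transpose]
    rfl
  -- apply adjugate
  have hfinal : M.det • w = (Matrix.adjugate M).mulVec (M.mulVec w) := by
    rw [Matrix.mulVec_mulVec, Matrix.adjugate_mul, Matrix.smul_mulVec,
      Matrix.one_mulVec]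
  set i0 : Fin n := ⟨0, hn⟩
  set kn : Fin n := ⟨n - 1, Nat.sub_lt hn one_pos⟩
  have hEval : M.det * x 0 = Matrix.adjugate M i0 kn * (C ((x (n-1)).coeff (n-1)) * Xp) := by
    have h0 : M.det • w i0 = (Matrix.adjugate M).mulVec (fun k : Fin n =>
        if (k : ℕ) + 1 = n then C ((x (k : ℕ)).coeff (k : ℕ)) * Xp else 0) i0 := by
      rw [← hM]
      exact congrFun hfinal i0
    have hrhs : (Matrix.adjugate M).mulVec (fun k : Fin n =>
        if (k : ℕ) + 1 = n then C ((x (k : ℕ)).coeff (k : ℕ)) * Xp else 0) i0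
        = Matrix.adjugate M i0 kn * (C ((x (n-1)).coeff (n-1)) * Xp) := by
      rw [Matrix.mulVec, dotProduct]
      have hknv : (kn : ℕ) = n - 1 := rfl
      rw [Finset.sum_eq_single kn]
      · rw [if_pos (show (kn : ℕ) + 1 = n by omega)]
      · intro j _ hj
        have hjn : ¬((j : ℕ) + 1 = n) := by
          intro hc
          exact hj (Fin.ext (by omega))
        rw [if_neg hjn, mul_zero]
      · intro h
        exact absurd (Finset.mem_univ kn) h
    rw [hrhs] at h0
    rw [← h0]
    show M.det * x 0 = M.det • x 0
    rw [smul_eq_mul]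
  -- conclude
  have hc0 : (x 0).coeff 0 ≠ 0 := hlead 0
  have hx0 : x 0 = C ((x 0).coeff 0) := Polynomial.eq_C_of_natDegree_eq_zero (hdeg 0)
  have hdvd : Xp ∣ A.charpoly := by
    have h1 : Xp ∣ A.charpoly * C ((x 0).coeff 0) := by
      refine ⟨Matrix.adjugate M i0 kn * C ((x (n-1)).coeff (n-1)), ?_⟩
      rw [← hMdet, ← hx0, hEval]
      ring
    have h2 := h1.mul_right (C ((x 0).coeff 0)⁻¹)
    rwa [mul_assoc, ← C_mul, mul_inv_cancel₀ hc0, C_1, mul_one] at h2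
  refine Polynomial.eq_of_monic_of_dvd_of_natDegree_le hXmonic A.charpoly_monic hdvd ?_
  rw [A.charpoly_natDegree_eq_dim, hXdeg, Fintype.card_fin]
end

section
/- (Interpolation lemma for Markov–Stieltjes) Fix distinct real points x_1 < ... < x_n and 1 ≤ ℓ < n. Then there is a real polynomial Q of degree at most 2n−2 such that Q(x_j) = 1 for j = 1,...,ℓ, Q(x_j) = 0 for j = ℓ+1,...,n, and Q(x) ≥ χ_{(−∞, x_ℓ]}(x) for all real x. -/
open Polynomial

namespace MSInterp

inductive Good (b : ℝ) {ι : Type} (x : ι → ℝ) : (ℝ → ℝ) → Prop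
  | one : Good b x (fun _ => 1)
  | gen (j : ι) {ρ : ℝ → ℝ} : Good b x ρ → Good b x (fun t => (x j - t)⁻¹ * ρ t)
  | add {ρ₁ ρ₂ : ℝ → ℝ} : Good b x ρ₁ → Good b x ρ₂ → Good b x (fun t => ρ₁ t + ρ₂ t)
  | smul (c : ℝ) (hc : 0 ≤ c) {ρ : ℝ → ℝ} : Good b x ρ → Good b x (fun t => c * ρ t)

variable {b : ℝ} {ι : Type} {x : ι → ℝ}

lemma Good.nonneg (hx : ∀ j, b < x j) {ρ} (h : Good b x ρ) :
    ∀ t, t ≤ b → 0 ≤ ρ t := by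
  induction h with
  | one => intro t _; norm_num
  | gen j hρ ih =>
      intro t ht
      exact mul_nonneg (inv_nonneg.2 (by have := hx j; linarith)) (ih t ht)
  | add h1 h2 ih1 ih2 => intro t ht; exact add_nonneg (ih1 t ht) (ih2 t ht)
  | smul c hc hρ ih => intro t ht; exact mul_nonneg hc (ih t ht)

lemma good_zero : Good b x (fun _ => 0) := by
  have := Good.smul (b := b) (x := x) 0 le_rfl Good.one
  simpa using this

/-- Divided-difference closure: for `ρ` in the cone and a node `τ ≤ b`, there is
`ρ'` in the cone with `ρ t = ρ τ + (t - τ) * ρ' t` on `(-∞, b]`. -/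
lemma Good.dd (hx : ∀ j, b < x j) {ρ} (h : Good b x ρ) :
    ∀ τ, τ ≤ b → ∃ ρ', Good b x ρ' ∧ ∀ t, t ≤ b → ρ t = ρ τ + (t - τ) * ρ' t := by
  induction h with
  | one =>
      intro τ hτ
      exact ⟨fun _ => 0, good_zero, fun t ht => by simp⟩
  | @gen j ρ hρ ih =>
      intro τ hτ
      obtain ⟨ρ', h1, h2⟩ := ih τ hτ
      have hjτ : (0:ℝ) < x j - τ := by have := hx j; linarith
      refine ⟨fun t => (x j - t)⁻¹ * ρ' t + ((x j - τ)⁻¹ * ρ τ) * ((x j - t)⁻¹ * 1),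
        Good.add (Good.gen j h1)
          (Good.smul _ (mul_nonneg (inv_nonneg.2 hjτ.le) (hρ.nonneg hx τ hτ)) (Good.gen j Good.one)),
        ?_⟩
      intro t ht
      have hjt : (0:ℝ) < x j - t := by have := hx j; linarith
      dsimp only
      rw [h2 t ht]
      field_simp
      ring
  | @add ρ₁ ρ₂ h1 h2 ih1 ih2 =>
      intro τ hτ
      obtain ⟨ρ₁', g1, e1⟩ := ih1 τ hτ
      obtain ⟨ρ₂', g2, e2⟩ := ih2 τ hτ
      refine ⟨fun t => ρ₁' t + ρ₂' t, Good.add g1 g2, ?_⟩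
      intro t ht
      dsimp only
      rw [e1 t ht, e2 t ht]; ring
  | @smul c hc ρ hρ ih =>
      intro τ hτ
      obtain ⟨ρ', g1, e1⟩ := ih τ hτ
      refine ⟨fun t => c * ρ' t, Good.smul c hc g1, ?_⟩
      intro t ht
      dsimp only
      rw [e1 t ht]; ring



lemma degree_lt_succ {p : ℝ[X]} {k : ℕ} (h : p.degree < ((k+1 : ℕ) : WithBot ℕ)) :
    p.degree ≤ (k : ℕ) := by
  by_cases hp : p = 0
  · simp [hp]
  · rw [degree_eq_natDegree hp] at h ⊢
    exact_mod_cast Nat.lt_succ_iff.mp (by exact_mod_cast h)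

/-- Main Newton interpolation scheme. -/
lemma main (hx : ∀ j, b < x j) :
    ∀ (L : List ℝ), (∀ τ ∈ L, τ ≤ b) → ∀ (ρ : ℝ → ℝ), Good b x ρ →
    ∃ (G : ℝ[X]) (ρ' : ℝ → ℝ), G.degree < (L.length : ℕ) ∧ Good b x ρ' ∧
      (∀ t, b ≤ t → 0 ≤ G.eval t) ∧
      (∀ t, t ≤ b → ρ t = G.eval t + ((L.map (fun τ => t - τ)).prod) * ρ' t) := by
  intro L
  induction L with
  | nil =>
      intro _ ρ hρ
      refine ⟨0, ρ, ?_, hρ, by simp, fun t ht => by simp⟩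
      simpa using WithBot.bot_lt_coe 0
  | cons τ L' ih =>
      intro hL ρ hρ
      have hτ : τ ≤ b := hL τ (by simp)
      obtain ⟨ρ₁, hρ₁, hid₁⟩ := hρ.dd hx τ hτ
      obtain ⟨G₁, ρ', hdeg, hρ', hpos, hid⟩ := ih (fun σ hσ => hL σ (by simp [hσ])) ρ₁ hρ₁
      refine ⟨C (ρ τ) + (X - C τ) * G₁, ρ', ?_, hρ', ?_, ?_⟩
      · have hlen : ((τ :: L').length : WithBot ℕ) = (1 : WithBot ℕ) + (L'.length : ℕ) := by
          push_cast [List.length_cons]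
          ring
        rw [hlen]
        have h1 : ((X - C τ) * G₁).degree < (1 : WithBot ℕ) + (L'.length : ℕ) := by
          rw [degree_mul, degree_X_sub_C]
          exact WithBot.add_lt_add_left (by simp) hdeg
        have h0 : (C (ρ τ)).degree < (1 : WithBot ℕ) + (L'.length : ℕ) := by
          refine lt_of_le_of_lt (degree_C_le) ?_
          have : ((0:ℕ) : WithBot ℕ) < ((L'.length + 1 : ℕ) : WithBot ℕ) := by
            exact_mod_cast Nat.succ_pos _
          simpa [Nat.cast_add, add_comm] using this
        exact lt_of_le_of_lt (degree_add_le _ _) (max_lt h0 h1)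
      · intro t ht
        simp only [eval_add, eval_mul, eval_sub, eval_X, eval_C]
        have h1 : 0 ≤ ρ τ := hρ.nonneg hx τ hτ
        have h2 : 0 ≤ (t - τ) := by linarith
        exact add_nonneg h1 (mul_nonneg h2 (hpos t ht))
      · intro t ht
        simp only [List.map_cons, List.prod_cons, eval_add, eval_mul, eval_sub, eval_X, eval_C]
        rw [hid₁ t ht, hid t ht]
        ring



lemma good_prod [Fintype ι] (hx : ∀ j, b < x j) (s : Finset ι) :
    Good b x (fun t => ∏ j ∈ s, ((x j - t)⁻¹ * (x j - t)⁻¹)) := by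
  classical
  induction s using Finset.induction_on with
  | empty => simpa using Good.one (b := b) (x := x)
  | @insert j s hj ih =>
      have h2 := Good.gen j (Good.gen j ih)
      have e : (fun t => ∏ k ∈ insert j s, ((x k - t)⁻¹ * (x k - t)⁻¹)) =
          (fun t => (x j - t)⁻¹ * ((x j - t)⁻¹ * ∏ k ∈ s, ((x k - t)⁻¹ * (x k - t)⁻¹))) := by
        funext t
        rw [Finset.prod_insert hj]
        ring
      rw [e]
      exact h2

lemma bind_length (f : ℕ → ℝ) : ∀ k, ((List.range k).flatMap fun i => [f i, f i]).length = 2 * k := by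
  intro k
  induction k with
  | zero => simp
  | succ k ih =>
      rw [List.range_succ, List.flatMap_append, List.length_append, ih]
      simp
      omega

lemma bind_prod (t : ℝ) (f : ℕ → ℝ) :
    ∀ k, (((List.range k).flatMap fun i => [f i, f i]).map (fun τ => t - τ)).prod
      = ∏ i ∈ Finset.range k, (t - f i) ^ 2 := by
  intro k
  induction k with
  | zero => simp
  | succ k ih =>
      rw [List.range_succ, List.flatMap_append, List.map_append, List.prod_append, ih,
        Finset.prod_range_succ]
      simp [sq]

lemma bind_mem {f : ℕ → ℝ} {τ : ℝ} {k : ℕ}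
    (h : τ ∈ (List.range k).flatMap fun i => [f i, f i]) : ∃ i < k, τ = f i := by
  rw [List.mem_flatMap] at h
  obtain ⟨i, hi, hτ⟩ := h
  rw [List.mem_range] at hi
  simp at hτ
  exact ⟨i, hi, hτ⟩


end MSInterp

open MSInterp

/-- Interpolation lemma for the Markov–Stieltjes inequalities: given distinct
real points `x_1 < … < x_n` and `1 ≤ ℓ < n`, there is a polynomial `Q` of degree
at most `2n − 2` with `Q(x_j) = 1` for `j ≤ ℓ`, `Q(x_j) = 0` for `j > ℓ`, and
`Q ≥ χ_{(−∞, x_ℓ]}` everywhere. -/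
theorem markov_stieltjes_interpolation
    (n : ℕ) (x : Fin n → ℝ) (hx : StrictMono x)
    (ℓ : ℕ) (hℓ1 : 1 ≤ ℓ) (hℓn : ℓ < n) :
    ∃ Q : Polynomial ℝ,
      Q.degree ≤ (2 * n - 2 : ℕ) ∧
      (∀ j : Fin n, Q.eval (x j) = if (j : ℕ) < ℓ then 1 else 0) ∧
      (∀ t : ℝ, (if t ≤ x ⟨ℓ - 1, by omega⟩ then (1 : ℝ) else 0) ≤ Q.eval t) := by
  classical
  have hn1 : ℓ - 1 < n := by omega
  set a : ℝ := x ⟨ℓ - 1, hn1⟩ with ha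
  set p : Fin (n - ℓ) → ℝ := fun i => x ⟨ℓ + i, by have := i.isLt; omega⟩ with hp
  have hpa : ∀ i, a < p i := by
    intro i
    apply hx
    rw [Fin.mk_lt_mk]
    have := i.isLt
    omega
  set g : ℝ → ℝ := fun t => ∏ i, ((p i - t)⁻¹ * (p i - t)⁻¹) with hgdef
  have hg : Good a p g := good_prod hpa Finset.univ
  set f : ℕ → ℝ := fun i => x ⟨min i (n-1), lt_of_le_of_lt (Nat.min_le_right _ _) (by omega)⟩ with hf
  set L : List ℝ := a :: ((List.range (ℓ-1)).flatMap fun i => [f i, f i]) with hL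
  have hLb : ∀ τ ∈ L, τ ≤ a := by
    intro τ hτ
    rcases List.mem_cons.mp hτ with h | h
    · rw [h]
    · obtain ⟨i, hi, rfl⟩ := bind_mem h
      apply hx.le_iff_le.mpr
      rw [Fin.mk_le_mk]
      omega
  obtain ⟨G, ρ', hdeg, hρ', hGpos, hid⟩ := main hpa L hLb g hg
  have hN : ∀ t, ((L.map (fun τ => t - τ)).prod)
      = (t - a) * ∏ i ∈ Finset.range (ℓ-1), (t - f i)^2 := by
    intro t
    rw [hL, List.map_cons, List.prod_cons, bind_prod]
  have hlen : L.length = (2*ℓ - 2) + 1 := by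
    rw [hL, List.length_cons, bind_length]
    omega
  have hdeg' : G.degree ≤ ((2*ℓ - 2 : ℕ) : WithBot ℕ) := by
    apply degree_lt_succ
    rw [← hlen]
    exact hdeg
  set W : ℝ[X] := ∏ i, (X - C (p i)) with hW
  have hWdeg : W.degree = ((n - ℓ : ℕ) : WithBot ℕ) := by
    rw [hW, degree_prod]
    simp [degree_X_sub_C]
  have hWeval : ∀ t, W.eval t = ∏ i, (t - p i) := by
    intro t
    rw [hW]
    simp [eval_prod]
  have key : ∀ t, t ≤ a → (W.eval t)^2 * g t = 1 := by
    intro t ht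
    rw [hWeval, hgdef]
    dsimp only
    rw [← Finset.prod_pow, ← Finset.prod_mul_distrib]
    apply Finset.prod_eq_one
    intro i _
    have hpi : p i - t ≠ 0 := ne_of_gt (by have := hpa i; linarith)
    have e : (t - p i)^2 = (p i - t)^2 := by ring
    rw [e]
    field_simp
  refine ⟨W^2 * G, ?_, ?_, ?_⟩
  · have h2 : (W^2).degree = ((2*(n-ℓ) : ℕ) : WithBot ℕ) := by
      rw [degree_pow, hWdeg, two_nsmul, ← Nat.cast_add]
      congr 1
      omega
    calc (W^2*G).degree ≤ (W^2).degree + G.degree := degree_mul_le _ _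
      _ ≤ ((2*(n-ℓ) : ℕ) : WithBot ℕ) + ((2*ℓ-2 : ℕ) : WithBot ℕ) := by
          rw [h2]; exact add_le_add_right hdeg' _
      _ = ((2*n-2 : ℕ) : WithBot ℕ) := by
          rw [← Nat.cast_add]; congr 1; omega
  · intro j
    by_cases hj : (j:ℕ) < ℓ
    · rw [if_pos hj]
      have hxja : x j ≤ a := by
        apply hx.le_iff_le.mpr
        rw [Fin.le_def]
        simp
        omega
      have hNj : ((L.map (fun τ => x j - τ)).prod) = 0 := by
        rw [hN]
        rcases Nat.lt_or_ge (j:ℕ) (ℓ-1) with h | h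
        · apply mul_eq_zero_of_right
          apply Finset.prod_eq_zero (Finset.mem_range.mpr h)
          have e : f (j:ℕ) = x j := by
            rw [hf]
            dsimp only
            congr 1
            exact Fin.ext (show min (j:ℕ) (n-1) = (j:ℕ) by omega)
          rw [e, sub_self]
          norm_num
        · apply mul_eq_zero_of_left
          have e : a = x j := by
            rw [ha]
            congr 1
            exact Fin.ext (show ℓ - 1 = (j:ℕ) by omega)
          rw [e, sub_self]
      have hGj : G.eval (x j) = g (x j) := by
        have h0 := hid (x j) hxja
        rw [hNj, zero_mul, add_zero] at h0
        exact h0.symm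
      rw [eval_mul, eval_pow, hGj]
      exact key (x j) hxja
    · rw [if_neg hj]
      push_neg at hj
      have hW0 : W.eval (x j) = 0 := by
        rw [hWeval]
        apply Finset.prod_eq_zero
          (Finset.mem_univ (⟨(j:ℕ) - ℓ, by have := j.isLt; omega⟩ : Fin (n-ℓ)))
        have e : p ⟨(j:ℕ) - ℓ, by have := j.isLt; omega⟩ = x j := by
          rw [hp]
          dsimp only
          congr 1
          exact Fin.ext (show ℓ + ((j:ℕ) - ℓ) = (j:ℕ) by omega)
        rw [e, sub_self]
      rw [eval_mul, eval_pow, hW0]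
      ring
  · intro t
    show (if t ≤ a then (1:ℝ) else 0) ≤ (W^2*G).eval t
    split_ifs with h
    · have hidt := hid t h
      have hρt := hρ'.nonneg hpa t h
      have hNt : ((L.map (fun τ => t - τ)).prod) ≤ 0 := by
        rw [hN]
        apply mul_nonpos_of_nonpos_of_nonneg (by linarith)
          (Finset.prod_nonneg fun i _ => sq_nonneg _)
      have hGg : g t ≤ G.eval t := by
        nlinarith [mul_nonneg (neg_nonneg.mpr hNt) hρt]
      calc (1:ℝ) = (W.eval t)^2 * g t := (key t h).symm
        _ ≤ (W.eval t)^2 * G.eval t := mul_le_mul_of_nonneg_left hGg (sq_nonneg _)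
        _ = (W^2*G).eval t := by rw [eval_mul, eval_pow]
    · have h' : a ≤ t := le_of_not_ge h
      rw [eval_mul, eval_pow]
      exact mul_nonneg (sq_nonneg _) (hGpos t h')
end

section
/- (Markov–Stieltjes inequality, upper bound) Let μ be a measure on ℝ with finite moments, x_0 ∈ ℝ, and let x_1^{(n)} < ... < x_n^{(n)} with associated weights λ_j^{(n)} = K_{n−1}(x_j^{(n)}, x_j^{(n)})^{−1} be the Gauss-type quadrature nodes and Cotes numbers passing through x_0. Then Σ_{j : x_j^{(n)} ≤ x_0} K_{n−1}(x_j^{(n)}, x_j^{(n)})^{−1} ≥ μ((−∞, x_0]). -/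
open MeasureTheory Polynomial

set_option maxHeartbeats 1000000

private lemma msu_prod_dvd (p : Polynomial ℝ) (s : Finset ℝ)
    (h : ∀ a ∈ s, p.eval a = 0) : (∏ a ∈ s, (X - C a)) ∣ p := by
  classical
  induction s using Finset.induction_on generalizing p with
  | empty => simpa using one_dvd p
  | insert a s hnotmem ih =>
    rw [Finset.prod_insert hnotmem]
    obtain ⟨q, hq⟩ := (dvd_iff_isRoot (p := p) (a := a)).2 (h a (Finset.mem_insert_self a s))
    have hq' : ∀ b ∈ s, q.eval b = 0 := by
      intro b hb
      have hba : b ≠ a := by rintro rfl; exact hnotmem hb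
      have := h b (Finset.mem_insert_of_mem hb)
      rw [hq] at this
      simp only [eval_mul, eval_sub, eval_X, eval_C] at this
      rcases mul_eq_zero.1 this with h1 | h1
      · exact absurd (sub_eq_zero.1 h1) hba
      · exact h1
    rw [hq]
    exact mul_dvd_mul dvd_rfl (ih q hq')

private lemma msu_deriv_root_of_sq_dvd {a : ℝ} {q : Polynomial ℝ}
    (h : (X - C a) ^ 2 ∣ q) : q.derivative.eval a = 0 := by
  obtain ⟨r, hr⟩ := h
  subst hr
  simp [derivative_mul, derivative_pow]

private lemma msu_mvt (q : Polynomial ℝ) {a b : ℝ} (hab : a < b) :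
    ∃ ζ ∈ Set.Ioo a b, q.eval b - q.eval a = q.derivative.eval ζ * (b - a) := by
  obtain ⟨ζ, hζ, hs⟩ := exists_hasDerivAt_eq_slope (fun x => q.eval x) (fun x => q.derivative.eval x)
    hab (q.continuous_aeval.continuousOn) (fun x _ => by simpa using q.hasDerivAt x)
  refine ⟨ζ, hζ, ?_⟩
  rw [hs, div_mul_cancel₀]
  exact sub_ne_zero.2 hab.ne'

private lemma msu_integrable_poly (μ : Measure ℝ)
    (hmom : ∀ k : ℕ, Integrable (fun t => |t| ^ k) μ) (q : Polynomial ℝ) :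
    Integrable (fun s => q.eval s) μ := by
  have : ∀ s : ℝ, q.eval s = ∑ i ∈ Finset.range (q.natDegree + 1), q.coeff i * s ^ i := by
    intro s; rw [eval_eq_sum_range]
  rw [funext this]
  apply integrable_finset_sum
  intro i _
  have h1 : Integrable (fun s : ℝ => s ^ i) μ := by
    refine (hmom i).mono' ?_ ?_
    · exact (continuous_pow i).aestronglyMeasurable
    · filter_upwards with s
      rw [Real.norm_eq_abs, abs_pow]
  exact h1.const_mul _

/-- Markov–Stieltjes upper bound: for the Gauss-type quadrature through `x₀`
with nodes `t 1 < … < t n` and Cotes numbers `K_{n−1}(t_j,t_j)⁻¹`,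
`Σ_{t_j ≤ x₀} K_{n−1}(t_j,t_j)⁻¹ ≥ μ((−∞, x₀])`. -/
theorem markov_stieltjes_upper
    (μ : Measure ℝ)
    (hmom : ∀ k : ℕ, Integrable (fun t => |t| ^ k) μ)
    (p : ℕ → Polynomial ℝ)
    (hdeg : ∀ j, (p j).natDegree = j)
    (hortho : ∀ j k, ∫ t, (p j).eval t * (p k).eval t ∂μ = if j = k then 1 else 0)
    (n : ℕ) (hn : 1 ≤ n) (x₀ : ℝ)
    (Kd : ℝ → ℝ)
    (hKd : ∀ s, Kd s = ∑ j ∈ Finset.range n, ((p j).eval s) ^ 2)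
    (t : Fin n → ℝ) (ht : StrictMono t)
    (hnode : ∃ j, t j = x₀)
    (hquad : ∀ Q : Polynomial ℝ, Q.degree ≤ (2 * n - 2 : ℕ) →
      ∫ s, Q.eval s ∂μ = ∑ j : Fin n, (Kd (t j))⁻¹ * Q.eval (t j)) :
    (μ (Set.Iic x₀)).toReal
      ≤ ∑ j ∈ Finset.univ.filter (fun j : Fin n => t j ≤ x₀), (Kd (t j))⁻¹ := by
  classical
  have hfin : IsFiniteMeasure μ := by
    constructor
    have h0 := hmom 0
    simp only [pow_zero] at h0
    rcases (integrable_const_iff).1 h0 with h | h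
    · norm_num at h
    · exact h.measure_univ_lt_top
  obtain ⟨J, hJ⟩ := hnode
  set N := n - 1 with hNdef
  have hNn : N < n := by omega
  have hnN : n = N + 1 := by omega
  set τ : ℕ → ℝ := fun i => if h : i < n then t ⟨i, h⟩ else 0 with hτdef
  have hτeq : ∀ j : Fin n, τ (j : ℕ) = t j := by
    intro j
    simp only [hτdef, dif_pos j.isLt, Fin.eta]
  have hτlt : ∀ {i j : ℕ}, i < j → j < n → τ i < τ j := by
    intro i j hij hj
    have hi : i < n := hij.trans hj
    simp only [hτdef, dif_pos hi, dif_pos hj]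
    exact ht (Fin.mk_lt_mk.2 hij)
  have hτle : ∀ {i j : ℕ}, i ≤ j → j < n → τ i ≤ τ j := by
    intro i j hij hj
    rcases hij.lt_or_eq with h | h
    · exact (hτlt h hj).le
    · rw [h]
  set j₀ := (J : ℕ) with hj₀def
  have hj₀n : j₀ < n := J.isLt
  have hx₀ : τ j₀ = x₀ := by rw [hτeq J]; exact hJ
  have hle_iff : ∀ j : Fin n, (t j ≤ x₀ ↔ (j : ℕ) ≤ j₀) := by
    intro j
    rw [← hJ]
    constructor
    · intro h
      exact_mod_cast (ht.le_iff_le.1 h)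
    · intro h
      exact ht.monotone (by exact_mod_cast h)
  suffices hex : ∃ Q : Polynomial ℝ, Q.degree ≤ (2 * n - 2 : ℕ) ∧
      (∀ j : Fin n, t j ≤ x₀ → Q.eval (t j) = 1) ∧
      (∀ j : Fin n, x₀ < t j → Q.eval (t j) = 0) ∧
      (∀ s : ℝ, Set.indicator (Set.Iic x₀) (fun _ => (1 : ℝ)) s ≤ Q.eval s) by
    obtain ⟨Q, hQdeg, hQlow, hQhigh, hQind⟩ := hex
    have hQint : Integrable (fun s => Q.eval s) μ := msu_integrable_poly μ hmom Q
    have hind : Integrable (Set.indicator (Set.Iic x₀) fun _ => (1 : ℝ)) μ :=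
      (integrable_const (1 : ℝ)).indicator measurableSet_Iic
    have h1 : (μ (Set.Iic x₀)).toReal
        = ∫ s, Set.indicator (Set.Iic x₀) (fun _ => (1 : ℝ)) s ∂μ := by
      rw [integral_indicator_const (1 : ℝ) measurableSet_Iic, smul_eq_mul, mul_one]; rfl
    have h2 : ∫ s, Set.indicator (Set.Iic x₀) (fun _ => (1 : ℝ)) s ∂μ ≤ ∫ s, Q.eval s ∂μ :=
      integral_mono hind hQint hQind
    have h3 := hquad Q hQdeg
    have h4 : ∑ j : Fin n, (Kd (t j))⁻¹ * Q.eval (t j)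
        = ∑ j ∈ Finset.univ.filter (fun j : Fin n => t j ≤ x₀), (Kd (t j))⁻¹ := by
      rw [← Finset.sum_filter_add_sum_filter_not Finset.univ (fun j : Fin n => t j ≤ x₀)
        (fun j => (Kd (t j))⁻¹ * Q.eval (t j))]
      have e1 : ∑ j ∈ Finset.univ.filter (fun j : Fin n => t j ≤ x₀),
          (Kd (t j))⁻¹ * Q.eval (t j)
          = ∑ j ∈ Finset.univ.filter (fun j : Fin n => t j ≤ x₀), (Kd (t j))⁻¹ := by
        refine Finset.sum_congr rfl ?_
        intro j hj
        rw [hQlow j (Finset.mem_filter.1 hj).2, mul_one]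
      have e2 : ∑ j ∈ Finset.univ.filter (fun j : Fin n => ¬ t j ≤ x₀),
          (Kd (t j))⁻¹ * Q.eval (t j) = 0 := by
        refine Finset.sum_eq_zero ?_
        intro j hj
        rw [hQhigh j (lt_of_not_ge (Finset.mem_filter.1 hj).2), mul_zero]
      rw [e1, e2, add_zero]
    rw [h1, ← h4, ← h3]
    exact h2
  by_cases hm : j₀ = N
  · -- no nodes above x₀ : take Q = 1
    refine ⟨1, le_trans degree_one_le (by exact_mod_cast Nat.zero_le _), ?_, ?_, ?_⟩
    · intro j _; simp
    · intro j hj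
      exfalso
      have : (j : ℕ) ≤ j₀ := by omega
      exact absurd ((hle_iff j).2 this) (not_le.2 hj)
    · intro s
      by_cases hs : s ∈ Set.Iic x₀
      · rw [Set.indicator_of_mem hs]; simp
      · rw [Set.indicator_of_notMem hs]; simp
  -- main case : there are nodes above x₀
  have hj₀N : j₀ < N := by omega
  set w₁ : Polynomial ℝ := (X - C x₀) * ∏ i ∈ Finset.range j₀, (X - C (τ i)) ^ 2 with hw₁def
  set w₂ : Polynomial ℝ := ∏ i ∈ Finset.Ico (j₀ + 1) n, (X - C (τ i)) ^ 2 with hw₂def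
  have hbase : ∀ a b : ℝ, a ≠ b → IsCoprime (X - C a : Polynomial ℝ) (X - C b) := by
    intro a b hab
    exact isCoprime_X_sub_C_of_isUnit_sub (IsUnit.mk0 _ (sub_ne_zero.2 hab))
  have hcop : IsCoprime w₁ w₂ := by
    apply IsCoprime.mul_left
    · apply IsCoprime.prod_right
      intro i hi
      obtain ⟨hi1, hi2⟩ := Finset.mem_Ico.1 hi
      exact (hbase x₀ (τ i) (by rw [← hx₀]; exact (hτlt (by omega) hi2).ne)).pow_right
    · apply IsCoprime.prod_left
      intro l hl
      apply IsCoprime.pow_left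
      apply IsCoprime.prod_right
      intro i hi
      obtain ⟨hi1, hi2⟩ := Finset.mem_Ico.1 hi
      have hl' := Finset.mem_range.1 hl
      exact (hbase (τ l) (τ i) (hτlt (by omega) hi2).ne).pow_right
  obtain ⟨u, v, huv⟩ := hcop
  set B := v %ₘ w₁ with hBdef
  set Q := B * w₂ with hQdef
  have hw₁monic : w₁.Monic :=
    (monic_X_sub_C x₀).mul (monic_prod_of_monic _ _ fun i _ => (monic_X_sub_C _).pow _)
  have hw₂monic : w₂.Monic := monic_prod_of_monic _ _ fun i _ => (monic_X_sub_C _).pow _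
  have hkey : Q - 1 = w₁ * (-u - (v /ₘ w₁) * w₂) := by
    have h := modByMonic_add_div v w₁
    rw [hQdef, hBdef]
    linear_combination w₂ * h + huv
  have hw₂dvdQ : w₂ ∣ Q := Dvd.intro_left B rfl
  -- eval values at the nodes
  have hdvd_low1 : ∀ i, i ≤ j₀ → (X - C (τ i)) ∣ w₁ := by
    intro i hi
    rcases hi.lt_or_eq with h | h
    · refine Dvd.dvd.mul_left ?_ _
      exact dvd_trans (Dvd.intro _ (sq (X - C (τ i))).symm)
        (Finset.dvd_prod_of_mem _ (Finset.mem_range.2 h))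
    · rw [h, hx₀]
      exact Dvd.intro _ rfl
  have hdvd_low2 : ∀ i, i < j₀ → ((X - C (τ i)) ^ 2) ∣ w₁ := by
    intro i hi
    exact Dvd.dvd.mul_left (Finset.dvd_prod_of_mem _ (Finset.mem_range.2 hi)) _
  have hdvd_high2 : ∀ i, j₀ < i → i < n → ((X - C (τ i)) ^ 2) ∣ w₂ := by
    intro i h1 h2
    exact Finset.dvd_prod_of_mem _ (Finset.mem_Ico.2 ⟨by omega, h2⟩)
  have hlow_eval : ∀ i, i ≤ j₀ → Q.eval (τ i) = 1 := by
    intro i hi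
    obtain ⟨r, hr⟩ := (hdvd_low1 i hi).trans ⟨_, hkey⟩
    have h1 : (Q - 1).eval (τ i) = 0 := by rw [hr]; simp
    simp only [eval_sub, eval_one] at h1
    linarith
  have hhigh_eval : ∀ i, j₀ < i → i < n → Q.eval (τ i) = 0 := by
    intro i h1 h2
    obtain ⟨r, hr⟩ := (dvd_trans (Dvd.intro _ (sq (X - C (τ i))).symm) (hdvd_high2 i h1 h2)).trans hw₂dvdQ
    rw [hr]; simp
  have hQ'low : ∀ i, i < j₀ → (derivative Q).eval (τ i) = 0 := by
    intro i hi
    have h2 : (X - C (τ i)) ^ 2 ∣ Q - 1 := (hdvd_low2 i hi).trans ⟨_, hkey⟩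
    have h3 := msu_deriv_root_of_sq_dvd h2
    rwa [derivative_sub, derivative_one, sub_zero] at h3
  have hQ'high : ∀ i, j₀ < i → i < n → (derivative Q).eval (τ i) = 0 := by
    intro i h1 h2
    exact msu_deriv_root_of_sq_dvd ((hdvd_high2 i h1 h2).trans hw₂dvdQ)
  -- degree bound
  have hw₁ne : w₁ ≠ 0 := hw₁monic.ne_zero
  have hw₂ne : w₂ ≠ 0 := hw₂monic.ne_zero
  have hprodnd : ∀ s : Finset ℕ, (∏ i ∈ s, (X - C (τ i)) ^ 2 : Polynomial ℝ).natDegree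
      = 2 * s.card := by
    intro s
    rw [natDegree_prod _ _ (fun i _ => pow_ne_zero _ (X_sub_C_ne_zero _))]
    simp [natDegree_pow, natDegree_X_sub_C, Finset.sum_const, mul_comm]
  have hw₁deg : w₁.natDegree = 2 * j₀ + 1 := by
    rw [hw₁def, natDegree_mul (X_sub_C_ne_zero x₀)
      (Finset.prod_ne_zero_iff.2 fun i _ => pow_ne_zero _ (X_sub_C_ne_zero _)),
      natDegree_X_sub_C, hprodnd]
    rw [Finset.card_range]
    omega
  have hw₂deg : w₂.natDegree = 2 * (N - j₀) := by
    rw [hw₂def, hprodnd, Nat.card_Ico]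
    omega
  have hQndeg : Q.natDegree ≤ 2 * N := by
    by_cases hB0 : B = 0
    · simp [hQdef, hB0]
    · have h1 : B.natDegree < w₁.natDegree :=
        natDegree_lt_natDegree hB0 (degree_modByMonic_lt v hw₁monic)
      rw [hQdef, natDegree_mul hB0 hw₂ne]
      omega
  have hQdeg : Q.degree ≤ ((2 * n - 2 : ℕ) : WithBot ℕ) := by
    refine degree_le_natDegree.trans ?_
    exact_mod_cast (by omega : Q.natDegree ≤ 2 * n - 2)
  -- nonconstancy
  have hτj₀1 : τ j₀ < τ (j₀ + 1) := hτlt (Nat.lt_succ_self _) (by omega)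
  have hhigh0 : Q.eval (τ (j₀ + 1)) = 0 := hhigh_eval (j₀ + 1) (by omega) (by omega)
  have hQ'ne : derivative Q ≠ 0 := by
    intro h0
    have h1 : Q.natDegree = 0 := natDegree_eq_zero_of_derivative_eq_zero h0
    have h2 := eq_C_of_natDegree_eq_zero h1
    have e1 : Q.eval (τ j₀) = Q.eval (τ (j₀ + 1)) := by rw [h2]; simp
    rw [hlow_eval j₀ le_rfl, hhigh0] at e1
    norm_num at e1
  -- Rolle points
  set G := (Finset.range N).erase j₀ with hGdef
  have hGmem : ∀ i ∈ G, i ≠ j₀ ∧ i < N := by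
    intro i hi
    simpa [hGdef, Finset.mem_erase, Finset.mem_range] using hi
  have hrolle : ∀ i : ℕ, ∃ x : ℝ, i ∈ G →
      x ∈ Set.Ioo (τ i) (τ (i + 1)) ∧ (derivative Q).eval x = 0 := by
    intro i
    by_cases hi : i ∈ G
    · obtain ⟨hne, hiN⟩ := hGmem i hi
      have hlt : τ i < τ (i + 1) := hτlt (Nat.lt_succ_self _) (by omega)
      have heq : Q.eval (τ i) = Q.eval (τ (i + 1)) := by
        rcases lt_or_gt_of_ne hne with h | h
        · rw [hlow_eval i (by omega), hlow_eval (i + 1) (by omega)]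
        · rw [hhigh_eval i h (by omega), hhigh_eval (i + 1) (by omega) (by omega)]
      obtain ⟨ζ, hζ, he⟩ := msu_mvt Q hlt
      refine ⟨ζ, fun _ => ⟨hζ, ?_⟩⟩
      have h0 : (derivative Q).eval ζ * (τ (i + 1) - τ i) = 0 := by rw [← he, heq]; ring
      have hne2 : τ (i + 1) - τ i ≠ 0 := sub_ne_zero.2 hlt.ne'
      exact (mul_eq_zero.1 h0).resolve_right hne2
    · exact ⟨0, fun h => absurd h hi⟩
  choose ξ hξ using hrolle
  have hξG : ∀ i ∈ G, τ i < ξ i ∧ ξ i < τ (i + 1) := by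
    intro i hi
    exact ⟨((hξ i) hi).1.1, ((hξ i) hi).1.2⟩
  have hξroot : ∀ i ∈ G, (derivative Q).eval (ξ i) = 0 := fun i hi => ((hξ i) hi).2
  have hξgt : ∀ i ∈ G, ∀ l : ℕ, l ≤ i → τ l < ξ i := by
    intro i hi l hl
    have hiN := (hGmem i hi).2
    exact lt_of_le_of_lt (hτle hl (by omega)) (hξG i hi).1
  have hξlt : ∀ i ∈ G, ∀ l : ℕ, i + 1 ≤ l → l < n → ξ i < τ l := by
    intro i hi l hl hln
    exact lt_of_lt_of_le (hξG i hi).2 (hτle hl hln)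
  -- the root set
  set E := (Finset.range n).erase j₀ with hEdef
  set S := E.image τ ∪ G.image ξ with hSdef
  have hEmem : ∀ l ∈ E, l ≠ j₀ ∧ l < n := by
    intro l hl
    simpa [hEdef, Finset.mem_erase, Finset.mem_range] using hl
  have hτinj : ∀ a ∈ E, ∀ b ∈ E, τ a = τ b → a = b := by
    intro a ha b hb hab
    by_contra hne
    rcases lt_or_gt_of_ne hne with h | h
    · exact absurd hab (hτlt h (hEmem b hb).2).ne
    · exact absurd hab.symm (hτlt h (hEmem a ha).2).ne
  have hξinj : ∀ a ∈ G, ∀ b ∈ G, ξ a = ξ b → a = b := by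
    intro a ha b hb hab
    by_contra hne
    rcases lt_or_gt_of_ne hne with h | h
    · have h1 := hξlt a ha b (by omega) (by have := (hGmem b hb).2; omega)
      have h2 := hξgt b hb b le_rfl
      rw [hab] at h1
      linarith
    · have h1 := hξlt b hb a (by omega) (by have := (hGmem a ha).2; omega)
      have h2 := hξgt a ha a le_rfl
      rw [hab] at h2
      linarith
  have hdisjoint : Disjoint (E.image τ) (G.image ξ) := by
    rw [Finset.disjoint_left]
    rintro a ha hb
    obtain ⟨l, hl, rfl⟩ := Finset.mem_image.1 ha
    obtain ⟨i, hi, he⟩ := Finset.mem_image.1 hb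
    have hln : l < n := (hEmem l hl).2
    rcases le_or_gt l i with h | h
    · exact (hξgt i hi l h).ne' he
    · exact (hξlt i hi l h hln).ne he
  have hScard : S.card = 2 * N - 1 := by
    rw [hSdef, Finset.card_union_of_disjoint hdisjoint,
      Finset.card_image_of_injOn (fun a ha b hb => hτinj a ha b hb),
      Finset.card_image_of_injOn (fun a ha b hb => hξinj a ha b hb),
      hEdef, hGdef, Finset.card_erase_of_mem (Finset.mem_range.2 hj₀n),
      Finset.card_erase_of_mem (Finset.mem_range.2 hj₀N),
      Finset.card_range, Finset.card_range]
    omega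
  have hSroot : ∀ a ∈ S, (derivative Q).eval a = 0 := by
    intro a ha
    rcases Finset.mem_union.1 ha with h | h
    · obtain ⟨l, hl, rfl⟩ := Finset.mem_image.1 h
      obtain ⟨hlne, hln⟩ := hEmem l hl
      rcases lt_or_gt_of_ne hlne with h' | h'
      · exact hQ'low l h'
      · exact hQ'high l h' hln
    · obtain ⟨i, hi, rfl⟩ := Finset.mem_image.1 h
      exact hξroot i hi
  obtain ⟨g, hg⟩ := msu_prod_dvd (derivative Q) S hSroot
  have hprodne : (∏ a ∈ S, (X - C a) : Polynomial ℝ) ≠ 0 :=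
    (monic_prod_of_monic _ _ fun a _ => monic_X_sub_C a).ne_zero
  have hgne : g ≠ 0 := by
    rintro rfl
    rw [mul_zero] at hg
    exact hQ'ne hg
  have hndS : (∏ a ∈ S, (X - C a) : Polynomial ℝ).natDegree = S.card := by
    rw [natDegree_prod _ _ fun a _ => X_sub_C_ne_zero a]
    simp [natDegree_X_sub_C]
  have hndQ' : (derivative Q).natDegree ≤ 2 * N - 1 := by
    have h1 := natDegree_derivative_le Q
    omega
  have hgdeg : g.natDegree = 0 := by
    have h1 := natDegree_mul hprodne hgne
    rw [← hg, hndS, hScard] at h1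
    omega
  set c := g.coeff 0 with hcdef
  have hgC : g = C c := eq_C_of_natDegree_eq_zero hgdeg
  have hcne : c ≠ 0 := fun h => hgne (by rw [hgC, h, map_zero])
  have hNG : N ∉ G := by
    intro h
    exact absurd (hGmem N h).2 (lt_irrefl N)
  have hEins : E = insert N G := by
    ext a
    simp only [hEdef, hGdef, Finset.mem_erase, Finset.mem_insert, Finset.mem_range]
    omega
  have heval : ∀ x : ℝ, (derivative Q).eval x
      = c * ((x - τ N) * ∏ i ∈ G, ((x - τ i) * (x - ξ i))) := by
    intro x
    rw [hg, hgC, eval_mul, eval_C, mul_comm]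
    congr 1
    rw [hSdef, Finset.prod_union hdisjoint, Finset.prod_image hτinj, Finset.prod_image hξinj,
      hEins, Finset.prod_insert hNG]
    simp only [eval_mul, eval_prod, eval_sub, eval_X, eval_C]
    rw [Finset.prod_mul_distrib]
    ring
  -- sign analysis
  have hprodpos : ∀ x : ℝ, (∀ i ∈ G, x < τ i ∨ ξ i < x) →
      0 < ∏ i ∈ G, ((x - τ i) * (x - ξ i)) := by
    intro x hx
    apply Finset.prod_pos
    intro i hi
    rcases hx i hi with h | h
    · have h2 : x < ξ i := h.trans (hξG i hi).1
      exact mul_pos_of_neg_of_neg (by linarith) (by linarith)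
    · have h2 : τ i < x := (hξG i hi).1.trans h
      exact mul_pos (by linarith) (by linarith)
  have hcpos : 0 < c := by
    obtain ⟨ζ, hζ, he⟩ := msu_mvt Q hτj₀1
    rw [hlow_eval j₀ le_rfl, hhigh0] at he
    have hd : 0 < τ (j₀ + 1) - τ j₀ := by linarith
    have hQζ : (derivative Q).eval ζ < 0 := by nlinarith
    rw [heval] at hQζ
    have hp : 0 < ∏ i ∈ G, ((ζ - τ i) * (ζ - ξ i)) := by
      apply hprodpos
      intro i hi
      obtain ⟨hne, hiN⟩ := hGmem i hi
      rcases lt_or_gt_of_ne hne with h | h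
      · exact Or.inr ((hξlt i hi j₀ (by omega) hj₀n).trans hζ.1)
      · exact Or.inl (lt_of_lt_of_le hζ.2 (hτle (by omega) (by omega)))
    have hζN : ζ - τ N < 0 := by
      have := lt_of_lt_of_le hζ.2 (hτle (by omega : j₀ + 1 ≤ N) hNn)
      linarith
    rcases lt_or_ge 0 c with h | h
    · exact h
    · exfalso
      have h1 : (ζ - τ N) * ∏ i ∈ G, ((ζ - τ i) * (ζ - ξ i)) < 0 :=
        mul_neg_of_neg_of_pos hζN hp
      nlinarith
  have hQ'neg : ∀ x : ℝ, x < τ N → (∀ i ∈ G, x < τ i ∨ ξ i < x) →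
      (derivative Q).eval x < 0 := by
    intro x h1 h2
    rw [heval]
    have hp := hprodpos x h2
    exact mul_neg_of_pos_of_neg hcpos (mul_neg_of_neg_of_pos (by linarith) hp)
  have hQ'posr : ∀ x : ℝ, τ N < x → 0 < (derivative Q).eval x := by
    intro x h1
    rw [heval]
    have hp := hprodpos x (fun i hi =>
      Or.inr ((hξlt i hi N (by have := (hGmem i hi).2; omega) hNn).trans h1))
    exact mul_pos hcpos (mul_pos (by linarith) hp)
  have hQ'posin : ∀ i ∈ G, ∀ x : ℝ, τ i < x → x < ξ i → 0 < (derivative Q).eval x := by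
    intro i hi x h1 h2
    rw [heval]
    have hiN := (hGmem i hi).2
    have hxN : x - τ N < 0 := by
      have h3 : x < τ N := lt_of_lt_of_le (h2.trans (hξG i hi).2) (hτle (by omega) hNn)
      linarith
    have hrest : 0 < ∏ l ∈ G.erase i, ((x - τ l) * (x - ξ l)) := by
      apply Finset.prod_pos
      intro l hl
      have hlG := Finset.mem_of_mem_erase hl
      have hlne : l ≠ i := Finset.ne_of_mem_erase hl
      rcases lt_or_gt_of_ne hlne with h | h
      · have ha : ξ l < x := (hξlt l hlG i (by omega)
          (by omega)).trans h1
        have hb : τ l < x := (hξG l hlG).1.trans ha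
        exact mul_pos (by linarith) (by linarith)
      · have ha : x < τ l := lt_of_lt_of_le (h2.trans (hξG i hi).2)
          (hτle (by omega) (by have := (hGmem l hlG).2; omega))
        have hb : x < ξ l := ha.trans (hξG l hlG).1
        exact mul_pos_of_neg_of_neg (by linarith) (by linarith)
    have hneg : (x - τ i) * (x - ξ i) < 0 :=
      mul_neg_of_pos_of_neg (by linarith) (by linarith)
    rw [← Finset.mul_prod_erase G _ hi]
    exact mul_pos hcpos (mul_pos_of_neg_of_neg hxN (mul_neg_of_neg_of_pos hneg hrest))
  -- covering lemma
  have cover : ∀ b : ℕ, b < n → ∀ a : ℕ, a < b → ∀ x' : ℝ, τ a ≤ x' → x' ≤ τ b →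
      ∃ i, a ≤ i ∧ i < b ∧ τ i ≤ x' ∧ x' ≤ τ (i + 1) := by
    intro b
    induction b with
    | zero => intro _ a ha; omega
    | succ b ih =>
      intro hbn a hab x' h1 h2
      rcases le_or_gt (τ b) x' with h | h
      · exact ⟨b, by omega, by omega, h, h2⟩
      · rcases Nat.lt_or_ge a b with h3 | h3
        · obtain ⟨i, hi1, hi2, hi3, hi4⟩ := ih (by omega) a h3 x' h1 h.le
          exact ⟨i, hi1, by omega, hi3, hi4⟩
        · have hab' : a = b := by omega
          rw [hab'] at h1
          exact absurd h1 (not_le.2 h)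
  -- Q ≥ 1 below x₀
  have val_low : ∀ x' : ℝ, x' ≤ x₀ → 1 ≤ Q.eval x' := by
    intro x' hx'
    rcases le_or_gt x' (τ 0) with h | h
    · rcases eq_or_lt_of_le h with he | hlt
      · rw [he, hlow_eval 0 (Nat.zero_le _)]
      · obtain ⟨ζ, hζ, hev⟩ := msu_mvt Q hlt
        have hz : (derivative Q).eval ζ < 0 := by
          apply hQ'neg
          · exact lt_of_lt_of_le hζ.2 (hτle (Nat.zero_le N) hNn)
          · intro i hi
            exact Or.inl (lt_of_lt_of_le hζ.2 (hτle (Nat.zero_le i)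
              (by have := (hGmem i hi).2; omega)))
        rw [hlow_eval 0 (Nat.zero_le _)] at hev
        nlinarith [hζ.2, hζ.1]
    · have hx0' : x' ≤ τ j₀ := by rw [hx₀]; exact hx'
      have hj₀pos : 0 < j₀ := by
        by_contra h0
        push_neg at h0
        interval_cases j₀
        · rw [hx₀] at h  -- τ 0 = x₀ < x' contradiction? careful
          linarith
      obtain ⟨i, hi1, hi2, hi3, hi4⟩ := cover j₀ hj₀n 0 hj₀pos x' h.le hx0'
      have hiG : i ∈ G := by
        simp only [hGdef, Finset.mem_erase, Finset.mem_range]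
        omega
      rcases le_or_gt x' (ξ i) with hle | hgt
      · rcases eq_or_lt_of_le hi3 with he | hlt2
        · rw [← he, hlow_eval i (by omega)]
        · obtain ⟨ζ, hζ, hev⟩ := msu_mvt Q hlt2
          have hz : 0 < (derivative Q).eval ζ :=
            hQ'posin i hiG ζ hζ.1 (lt_of_lt_of_le hζ.2 hle)
          rw [hlow_eval i (by omega)] at hev
          nlinarith [hζ.1, hζ.2]
      · rcases eq_or_lt_of_le hi4 with he | hlt2
        · rw [he, hlow_eval (i + 1) (by omega)]
        · obtain ⟨ζ, hζ, hev⟩ := msu_mvt Q hlt2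
          have hz : (derivative Q).eval ζ < 0 := by
            apply hQ'neg
            · exact lt_of_lt_of_le hζ.2 (hτle (by omega : i + 1 ≤ N) hNn)
            · intro l hl
              rcases lt_trichotomy l i with h' | h' | h'
              · refine Or.inr ?_
                have h1 : ξ l < τ (l + 1) := (hξG l hl).2
                have h2 : τ (l + 1) ≤ τ i := hτle (by omega) (by omega)
                linarith [hζ.1]
              · subst h'
                exact Or.inr (hgt.trans hζ.1)
              · refine Or.inl (lt_of_lt_of_le hζ.2 (hτle (by omega)
                  (by have := (hGmem l hl).2; omega)))
          rw [hlow_eval (i + 1) (by omega)] at hev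
          nlinarith [hζ.1, hζ.2]
  -- Q ≥ 0 above x₀
  have val_high : ∀ x' : ℝ, x₀ < x' → 0 ≤ Q.eval x' := by
    intro x' hx'
    have hx0' : τ j₀ < x' := by rw [hx₀]; exact hx'
    rcases le_or_gt (τ N) x' with h | h
    · rcases eq_or_lt_of_le h with he | hlt
      · rw [← he, hhigh_eval N (by omega) hNn]
      · obtain ⟨ζ, hζ, hev⟩ := msu_mvt Q hlt
        have hz := hQ'posr ζ hζ.1
        rw [hhigh_eval N (by omega) hNn] at hev
        nlinarith [hζ.1, hζ.2]
    · obtain ⟨i, hi1, hi2, hi3, hi4⟩ := cover N hNn j₀ hj₀N x' hx0'.le h.le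
      rcases eq_or_lt_of_le hi1 with he | hgt0
      · -- i = j₀
        rcases eq_or_lt_of_le hi4 with he2 | hlt2
        · rw [he2, hhigh_eval (i + 1) (by omega) (by omega)]
        · obtain ⟨ζ, hζ, hev⟩ := msu_mvt Q hlt2
          have hz : (derivative Q).eval ζ < 0 := by
            apply hQ'neg
            · exact lt_of_lt_of_le hζ.2 (hτle (by omega : i + 1 ≤ N) hNn)
            · intro l hl
              obtain ⟨hlne, hlN⟩ := hGmem l hl
              rcases lt_or_gt_of_ne hlne with h' | h'
              · refine Or.inr ?_
                have h1 : ξ l < τ j₀ := hξlt l hl j₀ (by omega) hj₀n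
                have h2 : τ j₀ < ζ := lt_of_le_of_lt (le_of_eq (by rw [← he])) (hi3.trans_lt hζ.1)
                linarith
              · exact Or.inl (lt_of_lt_of_le hζ.2 (hτle (by omega) (by omega)))
          rw [hhigh_eval (i + 1) (by omega) (by omega)] at hev
          nlinarith [hζ.1, hζ.2]
      · -- j₀ < i
        have hiG : i ∈ G := by
          simp only [hGdef, Finset.mem_erase, Finset.mem_range]
          omega
        rcases le_or_gt x' (ξ i) with hle | hgt
        · rcases eq_or_lt_of_le hi3 with he2 | hlt2
          · rw [← he2, hhigh_eval i (by omega) (by omega)]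
          · obtain ⟨ζ, hζ, hev⟩ := msu_mvt Q hlt2
            have hz : 0 < (derivative Q).eval ζ :=
              hQ'posin i hiG ζ hζ.1 (lt_of_lt_of_le hζ.2 hle)
            rw [hhigh_eval i (by omega) (by omega)] at hev
            nlinarith [hζ.1, hζ.2]
        · rcases eq_or_lt_of_le hi4 with he2 | hlt2
          · rw [he2, hhigh_eval (i + 1) (by omega) (by omega)]
          · obtain ⟨ζ, hζ, hev⟩ := msu_mvt Q hlt2
            have hz : (derivative Q).eval ζ < 0 := by
              apply hQ'neg
              · exact lt_of_lt_of_le hζ.2 (hτle (by omega : i + 1 ≤ N) hNn)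
              · intro l hl
                rcases lt_trichotomy l i with h' | h' | h'
                · refine Or.inr ?_
                  have h1 : ξ l < τ (l + 1) := (hξG l hl).2
                  have h2 : τ (l + 1) ≤ τ i := hτle (by omega) (by omega)
                  linarith [hi3.trans_lt hζ.1]
                · subst h'
                  exact Or.inr (hgt.trans hζ.1)
                · exact Or.inl (lt_of_lt_of_le hζ.2 (hτle (by omega)
                    (by have := (hGmem l hl).2; omega)))
            rw [hhigh_eval (i + 1) (by omega) (by omega)] at hev
            nlinarith [hζ.1, hζ.2]
  -- assemble
  refine ⟨Q, hQdeg, ?_, ?_, ?_⟩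
  · intro j hj
    rw [← hτeq j]
    exact hlow_eval _ ((hle_iff j).1 hj)
  · intro j hj
    rw [← hτeq j]
    have h1 : ¬ (j : ℕ) ≤ j₀ := fun h => absurd ((hle_iff j).2 h) (not_le.2 hj)
    exact hhigh_eval _ (by omega) j.isLt
  · intro s'
    by_cases hs' : s' ≤ x₀
    · rw [Set.indicator_of_mem (Set.mem_Iic.2 hs')]
      exact val_low s' hs'
    · rw [Set.indicator_of_notMem (by simpa using hs')]
      exact val_high s' (lt_of_not_ge hs')
end

section
/- For a measure μ on ℝ with finite moments and any real x_0 and n ≥ 1, μ({x_0}) ≤ K_{n−1}(x_0, x_0)^{−1}. -/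
open MeasureTheory Polynomial

lemma integrable_polynomial_eval (μ : Measure ℝ)
    (hmom : ∀ k : ℕ, Integrable (fun t => |t| ^ k) μ)
    (q : Polynomial ℝ) : Integrable (fun t => q.eval t) μ := by
  have h : ∀ t : ℝ, q.eval t = ∑ k ∈ Finset.range (q.natDegree + 1), q.coeff k * t ^ k := by
    intro t; rw [eval_eq_sum_range]
  simp_rw [h]
  apply integrable_finset_sum
  intro k _
  have hk : Integrable (fun t : ℝ => t ^ k) μ := by
    refine (hmom k).mono' ((measurable_id.pow_const k).aestronglyMeasurable) ?_
    filter_upwards with t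
    simp [abs_pow]
  exact hk.const_mul _

/-- The mass of any point is bounded by the inverse diagonal CD kernel:
`μ({x₀}) ≤ K_{n−1}(x₀,x₀)⁻¹`. -/
theorem point_mass_le_inv_CD
    (μ : Measure ℝ)
    (hmom : ∀ k : ℕ, Integrable (fun t => |t| ^ k) μ)
    (p : ℕ → Polynomial ℝ)
    (hdeg : ∀ j, (p j).natDegree = j)
    (hortho : ∀ j k, ∫ t, (p j).eval t * (p k).eval t ∂μ = if j = k then 1 else 0)
    (n : ℕ) (hn : 1 ≤ n) (x₀ : ℝ) :
    (μ {x₀}).toReal ≤ (∑ j ∈ Finset.range n, ((p j).eval x₀) ^ 2)⁻¹ := by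
  have hint : ∀ q r : Polynomial ℝ, Integrable (fun t => q.eval t * r.eval t) μ := by
    intro q r
    simpa [eval_mul] using integrable_polynomial_eval μ hmom (q * r)
  set a : ℕ → ℝ := fun j => (p j).eval x₀ with ha
  set K : ℝ := ∑ j ∈ Finset.range n, a j ^ 2 with hK
  -- positivity of K
  have hc : p 0 = C ((p 0).coeff 0) := Polynomial.eq_C_of_natDegree_eq_zero (hdeg 0)
  have h00 := hortho 0 0
  have hc0 : (p 0).coeff 0 ≠ 0 := by
    intro h
    rw [hc, h] at h00
    simp at h00
  have hKpos : 0 < K := by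
    have h0mem : (0 : ℕ) ∈ Finset.range n := Finset.mem_range.mpr hn
    have : a 0 ^ 2 ≤ K :=
      Finset.single_le_sum (fun j _ => sq_nonneg (a j)) h0mem
    have ha0 : a 0 ≠ 0 := by
      simp only [ha]
      rw [hc]
      simpa using hc0
    have h2 : 0 < a 0 ^ 2 := by positivity
    linarith
  -- the kernel polynomial Q
  set Q : Polynomial ℝ := ∑ j ∈ Finset.range n, C (a j) * p j with hQ
  have hQeval : ∀ t, Q.eval t = ∑ j ∈ Finset.range n, a j * (p j).eval t := by
    intro t; simp [hQ, eval_finset_sum]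
  have hQx₀ : Q.eval x₀ = K := by
    rw [hQeval, hK]
    exact Finset.sum_congr rfl fun j _ => (sq (a j)).symm
  -- ∫ Q² = K
  have hterm : ∀ j k : ℕ, Integrable
      (fun t => (a j * (p j).eval t) * (a k * (p k).eval t)) μ := by
    intro j k
    have := (hint (p j) (p k)).const_mul (a j * a k)
    refine this.congr ?_
    filter_upwards with t
    ring
  have hik : ∀ j ∈ Finset.range n, Integrable
      (fun t => ∑ k ∈ Finset.range n, (a j * (p j).eval t) * (a k * (p k).eval t)) μ :=
    fun j _ => integrable_finset_sum _ (fun k _ => hterm j k)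
  have hcalc : ∫ t, Q.eval t * Q.eval t ∂μ = K := by
    have : (fun t => Q.eval t * Q.eval t) =
        fun t => ∑ j ∈ Finset.range n, ∑ k ∈ Finset.range n,
          (a j * (p j).eval t) * (a k * (p k).eval t) := by
      funext t
      rw [hQeval, Finset.sum_mul_sum]
    rw [this, integral_finset_sum _ hik]
    have : ∀ j ∈ Finset.range n,
        (∫ t, ∑ k ∈ Finset.range n, (a j * (p j).eval t) * (a k * (p k).eval t) ∂μ)
          = a j ^ 2 := by
      intro j hj
      rw [integral_finset_sum _ (fun k _ => hterm j k)]
      have : ∀ k ∈ Finset.range n,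
          (∫ t, (a j * (p j).eval t) * (a k * (p k).eval t) ∂μ)
            = a j * a k * (if j = k then 1 else 0) := by
        intro k _
        rw [← hortho j k, ← integral_const_mul]
        congr 1; funext t; ring
      rw [Finset.sum_congr rfl this]
      simp only [mul_ite, mul_one, mul_zero]
      rw [Finset.sum_ite_eq, if_pos hj, sq]
    rw [Finset.sum_congr rfl this]
  -- lower bound via the point mass
  have hQQint : Integrable (fun t => Q.eval t * Q.eval t) μ := hint Q Q
  have hlow : (μ {x₀}).toReal * K ^ 2 ≤ ∫ t, Q.eval t * Q.eval t ∂μ := by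
    have h1 : ∫ t in ({x₀} : Set ℝ), Q.eval t * Q.eval t ∂μ
        = (μ {x₀}).toReal * K ^ 2 := by
      rw [integral_singleton, hQx₀, smul_eq_mul]
      rw [Measure.real]; ring
    rw [← h1]
    exact setIntegral_le_integral hQQint
      (Filter.Eventually.of_forall fun t => mul_self_nonneg _)
  rw [hcalc] at hlow
  rw [inv_eq_one_div, le_div_iff₀ hKpos]
  nlinarith [hlow, hKpos]
end

section
/- Let μ be a nontrivial measure on ℝ of compact support. For every x_0 ∈ ℝ, lim_{n→∞} K_n(x_0, x_0) = μ({x_0})^{−1} (interpreted as +∞ when μ({x_0}) = 0). -/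
open MeasureTheory Polynomial Filter Topology

section Aux
variable {μ : Measure ℝ}

lemma cd_integrable_eval [IsFiniteMeasure μ]
    (hmom : ∀ k : ℕ, Integrable (fun t => |t| ^ k) μ) (P : Polynomial ℝ) :
    Integrable (fun t => P.eval t) μ := by
  have h : (fun t => P.eval t)
      = fun t => ∑ i ∈ Finset.range (P.natDegree + 1), P.coeff i * t ^ i := by
    funext t; exact Polynomial.eval_eq_sum_range t
  rw [h]
  apply integrable_finset_sum
  intro i _
  apply Integrable.const_mul
  refine (hmom i).mono' ((continuous_pow i).aestronglyMeasurable) ?_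
  filter_upwards with t
  simp [abs_pow]

lemma cd_integrable_mul [IsFiniteMeasure μ]
    (hmom : ∀ k : ℕ, Integrable (fun t => |t| ^ k) μ) (P Q : Polynomial ℝ) :
    Integrable (fun t => P.eval t * Q.eval t) μ := by
  have := cd_integrable_eval hmom (P * Q)
  simpa using this

lemma cd_mem_span (p : ℕ → Polynomial ℝ) (hdeg : ∀ j, (p j).natDegree = j)
    (hne : ∀ j, p j ≠ 0) (n : ℕ) :
    ∀ Q : Polynomial ℝ, Q.natDegree ≤ n →
      Q ∈ Submodule.span ℝ (Set.range fun j : Fin (n + 1) => p j) := by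
  intro Q hQ
  generalize hd : Q.natDegree = d at hQ
  induction d using Nat.strong_induction_on generalizing Q with
  | _ d ih =>
    by_cases h0 : Q = 0
    · simp [h0]
    have hlead : (p d).leadingCoeff ≠ 0 := Polynomial.leadingCoeff_ne_zero.2 (hne d)
    set a : ℝ := Q.leadingCoeff / (p d).leadingCoeff with ha
    have haz : a ≠ 0 := div_ne_zero (Polynomial.leadingCoeff_ne_zero.2 h0) hlead
    have hpd_mem : p d ∈ Submodule.span ℝ (Set.range fun j : Fin (n + 1) => p j) :=
      Submodule.subset_span ⟨⟨d, by omega⟩, rfl⟩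
    have hdegQ : Q.degree = (Polynomial.C a * p d).degree := by
      rw [Polynomial.degree_C_mul haz, Polynomial.degree_eq_natDegree h0,
        Polynomial.degree_eq_natDegree (hne d), hd, hdeg d]
    have hlc : Q.leadingCoeff = (Polynomial.C a * p d).leadingCoeff := by
      rw [Polynomial.leadingCoeff_mul, Polynomial.leadingCoeff_C, ha,
        div_mul_cancel₀ _ hlead]
    have hsub := Polynomial.degree_sub_lt hdegQ h0 hlc
    have hQR : Q = (Q - Polynomial.C a * p d) + Polynomial.C a * p d := by ring
    have hmem2 : Polynomial.C a * p d ∈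
        Submodule.span ℝ (Set.range fun j : Fin (n + 1) => p j) := by
      simpa [Polynomial.smul_eq_C_mul] using
        Submodule.smul_mem _ a hpd_mem
    by_cases hR0 : Q - Polynomial.C a * p d = 0
    · rw [hQR, hR0, zero_add]; exact hmem2
    · have hltd : (Q - Polynomial.C a * p d).natDegree < d := by
        have := Polynomial.natDegree_lt_natDegree hR0 hsub
        omega
      have hR := ih _ hltd (Q - Polynomial.C a * p d) rfl (le_trans hltd.le hQ)
      rw [hQR]; exact Submodule.add_mem _ hR hmem2

/-- Integral of the square of a linear combination of the orthonormal polynomials. -/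
lemma cd_integral_sq [IsFiniteMeasure μ]
    (hmom : ∀ k : ℕ, Integrable (fun t => |t| ^ k) μ)
    (p : ℕ → Polynomial ℝ)
    (hortho : ∀ j k, ∫ t, (p j).eval t * (p k).eval t ∂μ = if j = k then 1 else 0)
    (n : ℕ) (c : Fin (n + 1) → ℝ) :
    ∫ t, (∑ j : Fin (n + 1), c j * (p j).eval t) ^ 2 ∂μ = ∑ j : Fin (n + 1), (c j) ^ 2 := by
  have hexp : ∀ t : ℝ, (∑ j : Fin (n + 1), c j * (p j).eval t) ^ 2
      = ∑ j : Fin (n + 1), ∑ k : Fin (n + 1),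
          (c j * c k) * ((p j).eval t * (p k).eval t) := by
    intro t
    rw [sq, Finset.sum_mul_sum]
    congr 1; funext j; congr 1; funext k; ring
  calc ∫ t, (∑ j : Fin (n + 1), c j * (p j).eval t) ^ 2 ∂μ
      = ∫ t, ∑ j : Fin (n + 1), ∑ k : Fin (n + 1),
          (c j * c k) * ((p j).eval t * (p k).eval t) ∂μ := by
        simp_rw [hexp]
    _ = ∑ j : Fin (n + 1), ∑ k : Fin (n + 1),
          ∫ t, (c j * c k) * ((p j).eval t * (p k).eval t) ∂μ := by
        rw [integral_finset_sum]
        · congr 1; funext j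
          rw [integral_finset_sum]
          intro k _
          exact (cd_integrable_mul hmom (p j) (p k)).const_mul _
        · intro j _
          exact integrable_finset_sum _ fun k _ =>
            (cd_integrable_mul hmom (p j) (p k)).const_mul _
    _ = ∑ j : Fin (n + 1), ∑ k : Fin (n + 1),
          (c j * c k) * (if (j : ℕ) = (k : ℕ) then (1:ℝ) else 0) := by
        congr 1; funext j; congr 1; funext k
        rw [MeasureTheory.integral_const_mul, hortho]
    _ = ∑ j : Fin (n + 1), (c j) ^ 2 := by
        congr 1; funext j
        rw [Finset.sum_eq_single j]
        · simp [sq]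
        · intro k _ hk
          simp [Fin.val_eq_val, hk.symm]
        · simp
end Aux

section Aux2
variable {μ : Measure ℝ}

lemma cd_point_le [IsFiniteMeasure μ] {f : ℝ → ℝ} (hf : Integrable f μ)
    (hpos : ∀ t, 0 ≤ f t) (x₀ : ℝ) :
    f x₀ * (μ {x₀}).toReal ≤ ∫ t, f t ∂μ := by
  have h1 : ∫ t in {x₀}, f t ∂μ = (μ {x₀}).toReal * f x₀ := by
    rw [Measure.restrict_singleton, integral_smul_measure, integral_dirac]
    simp [ENNReal.smul_def]
  have h2 := setIntegral_le_integral (s := {x₀}) hf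
    (Filter.Eventually.of_forall hpos)
  rw [h1] at h2
  linarith
end Aux2

section Aux3
variable {μ : Measure ℝ}

lemma cd_key_ineq [IsFiniteMeasure μ]
    (hmom : ∀ k : ℕ, Integrable (fun t => |t| ^ k) μ)
    (p : ℕ → Polynomial ℝ) (hdeg : ∀ j, (p j).natDegree = j) (hne : ∀ j, p j ≠ 0)
    (hortho : ∀ j k, ∫ t, (p j).eval t * (p k).eval t ∂μ = if j = k then 1 else 0)
    (n : ℕ) (x₀ : ℝ) (Q : Polynomial ℝ) (hQ : Q.natDegree ≤ n) :
    (Q.eval x₀) ^ 2 ≤ (∫ t, (Q.eval t) ^ 2 ∂μ)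
      * ∑ j ∈ Finset.range (n + 1), ((p j).eval x₀) ^ 2 := by
  obtain ⟨c, hc⟩ := (Submodule.mem_span_range_iff_exists_fun ℝ).1 (cd_mem_span p hdeg hne n Q hQ)
  have heval : ∀ t : ℝ, Q.eval t = ∑ i : Fin (n + 1), c i * (p i).eval t := by
    intro t
    rw [← hc, Polynomial.eval_finset_sum]
    congr 1; funext i; rw [Polynomial.eval_smul]; rfl
  have hint : ∫ t, (Q.eval t) ^ 2 ∂μ = ∑ i : Fin (n + 1), (c i) ^ 2 := by
    simp_rw [heval]
    exact cd_integral_sq hmom p hortho n c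
  have hcs := Finset.sum_mul_sq_le_sq_mul_sq Finset.univ c
    (fun i : Fin (n + 1) => (p i).eval x₀)
  have hsum : ∑ j ∈ Finset.range (n + 1), ((p j).eval x₀) ^ 2
      = ∑ i : Fin (n + 1), ((p i).eval x₀) ^ 2 :=
    (Fin.sum_univ_eq_sum_range _ _).symm
  rw [heval x₀, hint, hsum]
  exact hcs

end Aux3

/-- For a compactly supported measure on `ℝ`,
`lim_{n→∞} K_n(x₀,x₀) = μ({x₀})⁻¹` (with the inverse taken in `ℝ≥0∞`,
so the limit is `∞` when `μ({x₀}) = 0`). -/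
theorem cd_diagonal_tendsto_inv_point_mass
    (μ : Measure ℝ) [IsFiniteMeasure μ]
    (hsupp : ∃ R : ℝ, ∀ᵐ t ∂μ, |t| ≤ R)
    (hmom : ∀ k : ℕ, Integrable (fun t => |t| ^ k) μ)
    (p : ℕ → Polynomial ℝ)
    (hdeg : ∀ j, (p j).natDegree = j)
    (hortho : ∀ j k, ∫ t, (p j).eval t * (p k).eval t ∂μ = if j = k then 1 else 0)
    (x₀ : ℝ) :
    Tendsto (fun n : ℕ =>
        ENNReal.ofReal (∑ j ∈ Finset.range (n + 1), ((p j).eval x₀) ^ 2))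
      atTop (𝓝 ((μ {x₀})⁻¹)) := by
  set K : ℕ → ℝ := fun n => ∑ j ∈ Finset.range (n + 1), ((p j).eval x₀) ^ 2 with hKdef
  have hne : ∀ j, p j ≠ 0 := by
    intro j hj
    have h := hortho j j
    rw [hj] at h
    simp at h
  have hKpos : ∀ n, 0 < K n := by
    intro n
    have h0 : (p 0).eval x₀ ≠ 0 := by
      have hc : p 0 = Polynomial.C ((p 0).coeff 0) :=
        Polynomial.eq_C_of_natDegree_eq_zero (hdeg 0)
      intro hzero
      rw [hc, Polynomial.eval_C] at hzero
      exact hne 0 (by rw [hc, hzero]; simp)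
    have hmem : (0 : ℕ) ∈ Finset.range (n + 1) := by simp
    calc (0:ℝ) < ((p 0).eval x₀) ^ 2 := pow_two_pos_of_ne_zero h0
      _ ≤ K n := Finset.single_le_sum (f := fun j => ((p j).eval x₀) ^ 2) (fun j _ => sq_nonneg _) hmem
  have hKfin : ∀ N : ℕ, K N = ∑ i : Fin (N + 1), ((p i).eval x₀) ^ 2 := fun N =>
    (Fin.sum_univ_eq_sum_range (fun j => ((p j).eval x₀) ^ 2) (N + 1)).symm
  have hKmono : Monotone K := by
    intro a b hab
    exact Finset.sum_le_sum_of_subset_of_nonneg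
      (Finset.range_subset_range.2 (by omega)) (fun j _ _ => sq_nonneg _)
  have hmono : Monotone (fun n => ENNReal.ofReal (K n)) :=
    fun a b hab => ENNReal.ofReal_le_ofReal (hKmono hab)
  have htend := tendsto_atTop_iSup hmono
  suffices hS : (⨆ n, ENNReal.ofReal (K n)) = (μ {x₀})⁻¹ by
    rw [← hS]; exact htend
  -- integral of square of kernel-type combinations
  have hIsq : ∀ (n : ℕ) (Q : Polynomial ℝ), Q.natDegree ≤ n →
      (Q.eval x₀) ^ 2 ≤ (∫ t, (Q.eval t) ^ 2 ∂μ) * K n :=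
    fun n Q hQ => cd_key_ineq hmom p hdeg hne hortho n x₀ Q hQ
  refine le_antisymm (iSup_le fun n => ?_) ?_
  · -- upper bound : K n ≤ μ({x₀})⁻¹
    by_cases hz : μ {x₀} = 0
    · simp [hz]
    have hfin : μ {x₀} ≠ ⊤ := measure_ne_top μ _
    have hm : 0 < (μ {x₀}).toReal := ENNReal.toReal_pos hz hfin
    set m := (μ {x₀}).toReal with hmdef
    -- the kernel polynomial
    set Qk : Polynomial ℝ :=
      ∑ i : Fin (n + 1), Polynomial.C ((p i).eval x₀) * p i with hQk
    have hQkeval : ∀ t : ℝ, Qk.eval t = ∑ i : Fin (n + 1), (p i).eval x₀ * (p i).eval t := by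
      intro t; rw [hQk, Polynomial.eval_finset_sum]; simp
    have hQkx₀ : Qk.eval x₀ = K n := by
      rw [hQkeval, hKfin]
      exact Finset.sum_congr rfl fun i _ => by ring
    have hQint : ∫ t, (Qk.eval t) ^ 2 ∂μ = K n := by
      simp_rw [hQkeval]
      rw [cd_integral_sq hmom p hortho n (fun i => (p i).eval x₀), hKfin]
    have hIble : Integrable (fun t => (Qk.eval t) ^ 2) μ := by
      have := cd_integrable_mul hmom Qk Qk
      simpa [sq] using this
    have hpt := cd_point_le hIble (fun t => sq_nonneg _) x₀
    rw [hQint, hQkx₀, ← hmdef] at hpt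
    -- (K n)^2 * m ≤ K n  ⇒  K n ≤ m⁻¹
    have hKle : K n ≤ m⁻¹ := by
      have h1 : K n * m ≤ 1 := by nlinarith [hKpos n]
      rw [← one_div]
      exact (le_div_iff₀ hm).2 h1
    calc ENNReal.ofReal (K n) ≤ ENNReal.ofReal m⁻¹ := ENNReal.ofReal_le_ofReal hKle
      _ = (ENNReal.ofReal m)⁻¹ := ENNReal.ofReal_inv_of_pos hm
      _ = (μ {x₀})⁻¹ := by rw [hmdef, ENNReal.ofReal_toReal hfin]
  · -- lower bound
    obtain ⟨R, hR⟩ := hsupp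
    set A : ℝ := |R| + |x₀| + 1 with hAdef
    have hA : 0 < A := by positivity
    set G : ℕ → Polynomial ℝ := fun k =>
      (1 - Polynomial.C (A⁻¹ ^ 2) * (Polynomial.X - Polynomial.C x₀) ^ 2) ^ k with hGdef
    have hGeval : ∀ (k : ℕ) (t : ℝ),
        (G k).eval t = (1 - A⁻¹ ^ 2 * (t - x₀) ^ 2) ^ k := by
      intro k t; rw [hGdef]; simp
    have hGx₀ : ∀ k : ℕ, (G k).eval x₀ = 1 := by
      intro k; rw [hGeval]; simp
    have hGdeg : ∀ k : ℕ, (G k).natDegree ≤ 2 * k := by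
      intro k
      have h1 : (1 - Polynomial.C (A⁻¹ ^ 2)
          * (Polynomial.X - Polynomial.C x₀) ^ 2).natDegree ≤ 2 := by
        compute_degree
      calc (G k).natDegree ≤ k * (1 - Polynomial.C (A⁻¹ ^ 2)
            * (Polynomial.X - Polynomial.C x₀) ^ 2).natDegree :=
          Polynomial.natDegree_pow_le
        _ ≤ k * 2 := Nat.mul_le_mul_left k h1
        _ = 2 * k := by ring
    set I : ℕ → ℝ := fun k => ∫ t, ((G k).eval t) ^ 2 ∂μ with hIdef
    have hkey : ∀ k, 1 ≤ I k * K (2 * k) := by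
      intro k
      have := hIsq (2 * k) (G k) (hGdeg k)
      rwa [hGx₀, one_pow] at this
    -- dominated convergence
    have hDCT : Tendsto I atTop (𝓝 ((μ {x₀}).toReal)) := by
      have hind : ∫ t, Set.indicator {x₀} (fun _ => (1:ℝ)) t ∂μ = (μ {x₀}).toReal := by
        rw [MeasureTheory.integral_indicator (measurableSet_singleton x₀)]
        simp
      rw [← hind]
      apply tendsto_integral_of_dominated_convergence (bound := fun _ => (1:ℝ))
      · intro k
        exact ((Polynomial.continuous (G k)).pow 2).aestronglyMeasurable
      · exact integrable_const 1
      · intro k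
        filter_upwards [hR] with t ht
        have habs : |t - x₀| < A := by
          calc |t - x₀| ≤ |t| + |x₀| := abs_sub _ _
            _ ≤ |R| + |x₀| := by
                have : |t| ≤ |R| := le_trans ht (le_abs_self R)
                linarith
            _ < A := by rw [hAdef]; linarith
        have hu0 : 0 ≤ A⁻¹ ^ 2 * (t - x₀) ^ 2 := by positivity
        have hu1 : A⁻¹ ^ 2 * (t - x₀) ^ 2 < 1 := by
          have h1 : (t - x₀) ^ 2 < A ^ 2 := by
            nlinarith [abs_nonneg (t - x₀), sq_abs (t - x₀)]
          have h2 : A⁻¹ ^ 2 * A ^ 2 = 1 := by field_simp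
          nlinarith [sq_nonneg A⁻¹]
        set u := A⁻¹ ^ 2 * (t - x₀) ^ 2
        have h1u : 0 ≤ 1 - u := by linarith
        have h2u : 1 - u ≤ 1 := by linarith
        rw [Real.norm_eq_abs, hGeval, abs_of_nonneg (by positivity)]
        have := pow_le_one₀ h1u h2u (n := k)
        nlinarith [pow_nonneg h1u k]
      · filter_upwards [hR] with t ht
        by_cases htx : t = x₀
        · subst htx
          have : (fun k => ((G k).eval t) ^ 2) = fun _ => (1:ℝ) := by
            funext k; rw [hGx₀]; norm_num
          rw [this]
          simp [Set.indicator_of_mem]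
        · have habs : |t - x₀| < A := by
            calc |t - x₀| ≤ |t| + |x₀| := abs_sub _ _
              _ ≤ |R| + |x₀| := by
                  have : |t| ≤ |R| := le_trans ht (le_abs_self R)
                  linarith
              _ < A := by rw [hAdef]; linarith
          have hu0 : 0 < A⁻¹ ^ 2 * (t - x₀) ^ 2 := by
            have := pow_two_pos_of_ne_zero (sub_ne_zero.2 htx)
            positivity
          have hu1 : A⁻¹ ^ 2 * (t - x₀) ^ 2 < 1 := by
            have h1 : (t - x₀) ^ 2 < A ^ 2 := by
              nlinarith [abs_nonneg (t - x₀), sq_abs (t - x₀)]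
            have h2 : A⁻¹ ^ 2 * A ^ 2 = 1 := by field_simp
            nlinarith [sq_nonneg A⁻¹]
          set u := A⁻¹ ^ 2 * (t - x₀) ^ 2
          have hrw : (fun k => ((G k).eval t) ^ 2) = fun k => ((1 - u) ^ 2) ^ k := by
            funext k; rw [hGeval, ← pow_mul, ← pow_mul, Nat.mul_comm k 2]
          rw [hrw, Set.indicator_of_notMem (by simpa using htx)]
          exact tendsto_pow_atTop_nhds_zero_of_lt_one (sq_nonneg _) (by nlinarith)
    -- conclude
    have hIpos : ∀ k, 0 < I k := by
      intro k
      by_contra h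
      push_neg at h
      nlinarith [hkey k, hKpos (2 * k)]
    have hstep : ∀ k, (ENNReal.ofReal (I k))⁻¹ ≤ ⨆ n, ENNReal.ofReal (K n) := by
      intro k
      have hIK : (I k)⁻¹ ≤ K (2 * k) := by
        calc (I k)⁻¹ = (I k)⁻¹ * 1 := by ring
          _ ≤ (I k)⁻¹ * (I k * K (2 * k)) :=
            mul_le_mul_of_nonneg_left (hkey k) (by positivity)
          _ = K (2 * k) := by
            rw [inv_mul_eq_div, mul_comm, mul_div_assoc, div_self (hIpos k).ne', mul_one]
      calc (ENNReal.ofReal (I k))⁻¹ = ENNReal.ofReal (I k)⁻¹ :=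
            (ENNReal.ofReal_inv_of_pos (hIpos k)).symm
        _ ≤ ENNReal.ofReal (K (2 * k)) := ENNReal.ofReal_le_ofReal hIK
        _ ≤ ⨆ n, ENNReal.ofReal (K n) := le_iSup (fun n => ENNReal.ofReal (K n)) (2 * k)
    have htendinv : Tendsto (fun k => (ENNReal.ofReal (I k))⁻¹) atTop (𝓝 ((μ {x₀})⁻¹)) := by
      have h1 : Tendsto (fun k => ENNReal.ofReal (I k)) atTop
          (𝓝 (ENNReal.ofReal ((μ {x₀}).toReal))) :=
        (ENNReal.continuous_ofReal.tendsto _).comp hDCT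
      rw [ENNReal.ofReal_toReal (measure_ne_top μ _)] at h1
      exact h1.inv
    exact le_of_tendsto htendinv (Eventually.of_forall hstep)
end

section
/- (Lubinsky's inequality) Let μ ≤ μ* be nontrivial measures on ℝ with finite moments, with CD kernels K_n and K_n*. Then for all z, ζ: |K_n(z,ζ) − K_n*(z,ζ)|² ≤ K_n(z,z) · (K_n(ζ,ζ) − K_n*(ζ,ζ)). -/
open MeasureTheory Polynomial

private lemma integrable_polyeval {μ : Measure ℝ} (hmom : ∀ k : ℕ, Integrable (fun t => |t| ^ k) μ)
    (r : Polynomial ℝ) : Integrable (fun t => r.eval t) μ := by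
  have h : (fun t : ℝ => r.eval t)
      = fun t => ∑ k ∈ Finset.range (r.natDegree + 1), r.coeff k * t ^ k := by
    funext t; rw [Polynomial.eval_eq_sum_range]
  rw [h]
  refine integrable_finset_sum _ (fun k _ => Integrable.const_mul ?_ _)
  refine (hmom k).mono' (continuous_pow k).aestronglyMeasurable ?_
  exact ae_of_all _ fun t => by simp [Real.norm_eq_abs, abs_pow]

private lemma integrable_sum_mul_sum {μ : Measure ℝ}
    (hmom : ∀ k : ℕ, Integrable (fun t => |t| ^ k) μ)
    (N : ℕ) (α β : ℕ → ℂ) (u v : ℕ → Polynomial ℝ) :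
    Integrable (fun w : ℝ => (∑ j ∈ Finset.range N, α j * (((u j).eval w : ℝ) : ℂ)) *
        (∑ k ∈ Finset.range N, β k * (((v k).eval w : ℝ) : ℂ))) μ := by
  have hrw : (fun w : ℝ => (∑ j ∈ Finset.range N, α j * (((u j).eval w : ℝ) : ℂ)) *
      (∑ k ∈ Finset.range N, β k * (((v k).eval w : ℝ) : ℂ)))
      = fun w : ℝ => ∑ j ∈ Finset.range N, ∑ k ∈ Finset.range N,
          (α j * β k) * ((((u j) * (v k)).eval w : ℝ) : ℂ) := by
    funext w
    rw [Finset.sum_mul_sum]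
    refine Finset.sum_congr rfl fun j _ => Finset.sum_congr rfl fun k _ => ?_
    push_cast [Polynomial.eval_mul]
    ring
  rw [hrw]
  refine integrable_finset_sum _ fun j _ => integrable_finset_sum _ fun k _ => ?_
  exact ((integrable_polyeval hmom _).ofReal).const_mul _

private lemma integral_sum_mul_sum {μ : Measure ℝ}
    (hmom : ∀ k : ℕ, Integrable (fun t => |t| ^ k) μ)
    (N : ℕ) (α β : ℕ → ℂ) (u v : ℕ → Polynomial ℝ) :
    ∫ w, (∑ j ∈ Finset.range N, α j * (((u j).eval w : ℝ) : ℂ)) *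
        (∑ k ∈ Finset.range N, β k * (((v k).eval w : ℝ) : ℂ)) ∂μ
      = ∑ j ∈ Finset.range N, ∑ k ∈ Finset.range N,
          α j * β k * ((∫ w, (u j).eval w * (v k).eval w ∂μ : ℝ) : ℂ) := by
  have hrw : (fun w : ℝ => (∑ j ∈ Finset.range N, α j * (((u j).eval w : ℝ) : ℂ)) *
      (∑ k ∈ Finset.range N, β k * (((v k).eval w : ℝ) : ℂ)))
      = fun w : ℝ => ∑ j ∈ Finset.range N, ∑ k ∈ Finset.range N,
          (α j * β k) * ((((u j) * (v k)).eval w : ℝ) : ℂ) := by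
    funext w
    rw [Finset.sum_mul_sum]
    refine Finset.sum_congr rfl fun j _ => Finset.sum_congr rfl fun k _ => ?_
    push_cast [Polynomial.eval_mul]
    ring
  have hint : ∀ j k : ℕ, Integrable
      (fun w : ℝ => (α j * β k) * ((((u j) * (v k)).eval w : ℝ) : ℂ)) μ :=
    fun j k => ((integrable_polyeval hmom _).ofReal).const_mul _
  rw [hrw, integral_finset_sum _
    (fun j _ => integrable_finset_sum _ (fun k _ => hint j k))]
  refine Finset.sum_congr rfl fun j _ => ?_
  rw [integral_finset_sum _ (fun k _ => hint j k)]
  refine Finset.sum_congr rfl fun k _ => ?_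
  rw [integral_const_mul]
  simp only [← Polynomial.eval_mul]
  congr 1
  have := Complex.ofRealCLM.integral_comp_comm (integrable_polyeval hmom (u j * v k))
  simpa using this

private lemma integral_cauchy_schwarz {μ : Measure ℝ} {f g : ℝ → ℝ}
    (hf2 : Integrable (fun x => f x ^ 2) μ) (hg2 : Integrable (fun x => g x ^ 2) μ)
    (hfg : Integrable (fun x => f x * g x) μ) :
    (∫ x, f x * g x ∂μ) ^ 2 ≤ (∫ x, f x ^ 2 ∂μ) * (∫ x, g x ^ 2 ∂μ) := by
  have key : ∀ lam : ℝ,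
      0 ≤ (∫ x, g x ^ 2 ∂μ) * (lam * lam) + (2 * ∫ x, f x * g x ∂μ) * lam
          + ∫ x, f x ^ 2 ∂μ := by
    intro lam
    have h0 : 0 ≤ ∫ x, (lam * g x + f x) ^ 2 ∂μ :=
      integral_nonneg fun x => sq_nonneg _
    have e0 : ∫ x, (lam * g x + f x) ^ 2 ∂μ
        = ∫ x, (lam * lam * g x ^ 2 + (2 * lam * (f x * g x) + f x ^ 2)) ∂μ := by
      congr 1
      funext x
      ring
    have hA : Integrable (fun x => 2 * lam * (f x * g x) + f x ^ 2) μ :=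
      (hfg.const_mul _).add hf2
    rw [e0, integral_add (hg2.const_mul (lam * lam)) hA,
      integral_add (hfg.const_mul (2 * lam)) hf2, integral_const_mul,
      integral_const_mul] at h0
    nlinarith [h0]
  have hd := discrim_le_zero key
  rw [discrim] at hd
  nlinarith [hd]

private lemma poly_rep (p : ℕ → Polynomial ℝ) (hpdeg : ∀ j, (p j).natDegree = j)
    (hne : ∀ j, p j ≠ 0) :
    ∀ m : ℕ, ∀ r : Polynomial ℝ, r.natDegree ≤ m →
      ∃ d : ℕ → ℝ, r = ∑ j ∈ Finset.range (m + 1), Polynomial.C (d j) * p j := by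
  intro m
  induction m with
  | zero =>
    intro r hr
    obtain ⟨a, ha, hp0⟩ : ∃ a : ℝ, a ≠ 0 ∧ p 0 = Polynomial.C a := by
      refine ⟨(p 0).coeff 0, ?_, Polynomial.eq_C_of_natDegree_le_zero (le_of_eq (hpdeg 0))⟩
      intro h
      exact hne 0 (by rw [Polynomial.eq_C_of_natDegree_le_zero (le_of_eq (hpdeg 0)), h, map_zero])
    refine ⟨fun _ => r.coeff 0 / a, ?_⟩
    rw [Finset.sum_range_one, hp0, ← Polynomial.C_mul, div_mul_cancel₀ _ ha]
    exact Polynomial.eq_C_of_natDegree_le_zero hr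
  | succ m ih =>
    intro r hr
    have hlc : (p (m + 1)).coeff (m + 1) ≠ 0 := by
      have h1 := mt Polynomial.leadingCoeff_eq_zero.mp (hne (m + 1))
      rwa [Polynomial.leadingCoeff, hpdeg] at h1
    set c := r.coeff (m + 1) / (p (m + 1)).coeff (m + 1) with hc
    have hr' : (r - Polynomial.C c * p (m + 1)).natDegree ≤ m := by
      refine Polynomial.natDegree_le_iff_coeff_eq_zero.mpr fun k hk => ?_
      rw [Polynomial.coeff_sub, Polynomial.coeff_C_mul]
      rcases eq_or_lt_of_le (Nat.succ_le_of_lt hk) with h | h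
      · rw [← h, hc, div_mul_cancel₀ _ hlc, sub_self]
      · rw [Polynomial.coeff_eq_zero_of_natDegree_lt (lt_of_le_of_lt hr h),
          Polynomial.coeff_eq_zero_of_natDegree_lt (by rw [hpdeg]; exact h),
          mul_zero, sub_self]
    obtain ⟨d, hd⟩ := ih _ hr'
    refine ⟨fun j => if j = m + 1 then c else d j, ?_⟩
    have hcongr : ∑ j ∈ Finset.range (m + 1),
        Polynomial.C (if j = m + 1 then c else d j) * p j
        = ∑ j ∈ Finset.range (m + 1), Polynomial.C (d j) * p j :=
      Finset.sum_congr rfl fun j hj => by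
        rw [if_neg (Nat.ne_of_lt (Finset.mem_range.mp hj))]
    calc r = (r - Polynomial.C c * p (m + 1)) + Polynomial.C c * p (m + 1) := by ring
      _ = (∑ j ∈ Finset.range (m + 1), Polynomial.C (d j) * p j)
            + Polynomial.C c * p (m + 1) := by rw [hd]
      _ = (∑ j ∈ Finset.range (m + 1),
            Polynomial.C (if j = m + 1 then c else d j) * p j)
            + Polynomial.C (if m + 1 = m + 1 then c else d (m + 1)) * p (m + 1) := by
          rw [hcongr, if_pos rfl]
      _ = ∑ j ∈ Finset.range (m + 1 + 1),
            Polynomial.C (if j = m + 1 then c else d j) * p j :=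
          (Finset.sum_range_succ _ _).symm
private noncomputable def S1 (N : ℕ) (α : ℕ → ℂ) (u : ℕ → Polynomial ℝ) (w : ℝ) : ℂ :=
  ∑ j ∈ Finset.range N, α j * (((u j).eval w : ℝ) : ℂ)

private lemma integrable_S1_mul {μ : Measure ℝ}
    (hmom : ∀ k : ℕ, Integrable (fun t => |t| ^ k) μ)
    (N : ℕ) (α β : ℕ → ℂ) (u v : ℕ → Polynomial ℝ) :
    Integrable (fun w : ℝ => S1 N α u w * S1 N β v w) μ :=
  integrable_sum_mul_sum hmom N α β u v

private lemma integral_S1_mul {μ : Measure ℝ}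
    (hmom : ∀ k : ℕ, Integrable (fun t => |t| ^ k) μ)
    (N : ℕ) (α β : ℕ → ℂ) (u v : ℕ → Polynomial ℝ) :
    ∫ w, S1 N α u w * S1 N β v w ∂μ
      = ∑ j ∈ Finset.range N, ∑ k ∈ Finset.range N,
          α j * β k * ((∫ w, (u j).eval w * (v k).eval w ∂μ : ℝ) : ℂ) :=
  integral_sum_mul_sum hmom N α β u v

private lemma integral_S1_mul_ortho {μ : Measure ℝ}
    (hmom : ∀ k : ℕ, Integrable (fun t => |t| ^ k) μ)
    (N : ℕ) (α β : ℕ → ℂ) (u v : ℕ → Polynomial ℝ)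
    (horth : ∀ j k, ∫ t, (u j).eval t * (v k).eval t ∂μ = if j = k then 1 else 0) :
    ∫ w, S1 N α u w * S1 N β v w ∂μ = ∑ j ∈ Finset.range N, α j * β j := by
  rw [integral_S1_mul hmom]
  calc ∑ j ∈ Finset.range N, ∑ k ∈ Finset.range N,
        α j * β k * ((∫ w, (u j).eval w * (v k).eval w ∂μ : ℝ) : ℂ)
      = ∑ j ∈ Finset.range N, ∑ k ∈ Finset.range N,
          (if j = k then α j * β k else 0) := by
        refine Finset.sum_congr rfl fun j _ => Finset.sum_congr rfl fun k _ => ?_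
        rw [horth j k]
        split <;> simp
    _ = ∑ j ∈ Finset.range N, α j * β j := by
        refine Finset.sum_congr rfl fun j hj => ?_
        rw [Finset.sum_ite_eq (Finset.range N) j (fun k => α j * β k), if_pos hj]

private lemma integral_S1_mul_rep {μ : Measure ℝ}
    (hmom : ∀ k : ℕ, Integrable (fun t => |t| ^ k) μ)
    (N : ℕ) (α β : ℕ → ℂ) (u v : ℕ → Polynomial ℝ) :
    ∫ w, S1 N α u w * S1 N β v w ∂μ
      = ∑ k ∈ Finset.range N, β k * (∑ j ∈ Finset.range N,
          ((∫ w, (u j).eval w * (v k).eval w ∂μ : ℝ) : ℂ) * α j) := by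
  rw [integral_S1_mul hmom, Finset.sum_comm]
  refine Finset.sum_congr rfl fun k _ => ?_
  rw [Finset.mul_sum]
  refine Finset.sum_congr rfl fun j _ => ?_
  ring

private lemma conj_S1 (N : ℕ) (α : ℕ → ℂ) (u : ℕ → Polynomial ℝ) (w : ℝ) :
    S1 N (fun j => (starRingEnd ℂ) (α j)) u w = (starRingEnd ℂ) (S1 N α u w) := by
  unfold S1
  rw [map_sum]
  refine Finset.sum_congr rfl fun j _ => ?_
  rw [map_mul, Complex.conj_ofReal]

private lemma normSq_S1 (N : ℕ) (α : ℕ → ℂ) (u : ℕ → Polynomial ℝ) (w : ℝ) :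
    ‖S1 N α u w‖ ^ 2 = (S1 N α u w * S1 N (fun j => (starRingEnd ℂ) (α j)) u w).re := by
  rw [conj_S1, Complex.mul_conj, Complex.ofReal_re, Complex.normSq_eq_norm_sq]

private lemma integrable_S1_normSq {μ : Measure ℝ}
    (hmom : ∀ k : ℕ, Integrable (fun t => |t| ^ k) μ)
    (N : ℕ) (α : ℕ → ℂ) (u : ℕ → Polynomial ℝ) :
    Integrable (fun w : ℝ => ‖S1 N α u w‖ ^ 2) μ := by
  have h := (integrable_S1_mul hmom N α (fun j => (starRingEnd ℂ) (α j)) u u).re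
  exact h.congr (ae_of_all _ fun w => (normSq_S1 N α u w).symm)

private lemma integral_S1_normSq {μ : Measure ℝ}
    (hmom : ∀ k : ℕ, Integrable (fun t => |t| ^ k) μ)
    (N : ℕ) (α : ℕ → ℂ) (u : ℕ → Polynomial ℝ) :
    ∫ w, ‖S1 N α u w‖ ^ 2 ∂μ
      = (∫ w, S1 N α u w * S1 N (fun j => (starRingEnd ℂ) (α j)) u w ∂μ).re := by
  rw [show (∫ w, S1 N α u w * S1 N (fun j => (starRingEnd ℂ) (α j)) u w ∂μ).re
      = RCLike.re (∫ w, S1 N α u w * S1 N (fun j => (starRingEnd ℂ) (α j)) u w ∂μ) from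
    (congrFun RCLike.re_eq_complex_re _).symm,
    ← integral_re (integrable_S1_mul hmom N α (fun j => (starRingEnd ℂ) (α j)) u u)]
  refine integral_congr_ae (ae_of_all _ fun w => ?_)
  show ‖S1 N α u w‖ ^ 2 = RCLike.re (S1 N α u w * S1 N (fun j => (starRingEnd ℂ) (α j)) u w)
  rw [show RCLike.re (S1 N α u w * S1 N (fun j => (starRingEnd ℂ) (α j)) u w)
      = (S1 N α u w * S1 N (fun j => (starRingEnd ℂ) (α j)) u w).re from
    congrFun RCLike.re_eq_complex_re _]
  exact normSq_S1 N α u w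

private lemma integral_S1_normSq_ortho {μ : Measure ℝ}
    (hmom : ∀ k : ℕ, Integrable (fun t => |t| ^ k) μ)
    (N : ℕ) (α : ℕ → ℂ) (u : ℕ → Polynomial ℝ)
    (horth : ∀ j k, ∫ t, (u j).eval t * (u k).eval t ∂μ = if j = k then 1 else 0) :
    ∫ w, ‖S1 N α u w‖ ^ 2 ∂μ = ∑ j ∈ Finset.range N, ‖α j‖ ^ 2 := by
  rw [integral_S1_normSq hmom, integral_S1_mul_ortho hmom N α _ u u horth]
  rw [Complex.re_sum]
  refine Finset.sum_congr rfl fun j _ => ?_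
  rw [Complex.mul_conj, Complex.ofReal_re, Complex.normSq_eq_norm_sq]

/-- Lubinsky's inequality: if `μ ≤ μ*`, then
`|K_n(z,ζ) − K_n*(z,ζ)|² ≤ K_n(z,z) (K_n(ζ,ζ) − K_n*(ζ,ζ))`. -/
theorem lubinsky_inequality
    (μ μstar : Measure ℝ) (hle : μ ≤ μstar)
    (hmom : ∀ k : ℕ, Integrable (fun t => |t| ^ k) μstar)
    (p q : ℕ → Polynomial ℝ)
    (hpdeg : ∀ j, (p j).natDegree = j)
    (hqdeg : ∀ j, (q j).natDegree = j)
    (hportho : ∀ j k, ∫ t, (p j).eval t * (p k).eval t ∂μ = if j = k then 1 else 0)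
    (hqortho : ∀ j k, ∫ t, (q j).eval t * (q k).eval t ∂μstar = if j = k then 1 else 0)
    (n : ℕ) :
    ∀ z ζ : ℂ,
      ‖∑ j ∈ Finset.range (n + 1),
          ((starRingEnd ℂ) (Polynomial.aeval z (p j)) * Polynomial.aeval ζ (p j)
            - (starRingEnd ℂ) (Polynomial.aeval z (q j)) * Polynomial.aeval ζ (q j))‖ ^ 2
      ≤ (∑ j ∈ Finset.range (n + 1), ‖Polynomial.aeval z (p j)‖ ^ 2)
        * ((∑ j ∈ Finset.range (n + 1), ‖Polynomial.aeval ζ (p j)‖ ^ 2)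
            - ∑ j ∈ Finset.range (n + 1), ‖Polynomial.aeval ζ (q j)‖ ^ 2) := by
  intro z ζ
  have hmomμ : ∀ k : ℕ, Integrable (fun t => |t| ^ k) μ :=
    fun k => (hmom k).mono_measure hle
  have hpne : ∀ j, p j ≠ 0 := by
    intro j h
    have h1 := hportho j j
    rw [h] at h1
    simp at h1
  set N := n + 1 with hN
  -- the expansion coefficients of `q k` in terms of the `p j`
  have hrep : ∀ k ∈ Finset.range N, ∀ x : ℂ,
      (∑ j ∈ Finset.range N,
        ((∫ t, (p j).eval t * (q k).eval t ∂μ : ℝ) : ℂ) * Polynomial.aeval x (p j))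
        = Polynomial.aeval x (q k) := by
    intro k hk x
    obtain ⟨d, hd⟩ := poly_rep p hpdeg hpne n (q k)
      (by rw [hqdeg]; exact Nat.lt_succ_iff.mp (Finset.mem_range.mp hk))
    have hcoef : ∀ j ∈ Finset.range N,
        (∫ t, (p j).eval t * (q k).eval t ∂μ) = d j := by
      intro j hj
      have e1 : (fun t : ℝ => (p j).eval t * (q k).eval t)
          = fun t : ℝ => ∑ i ∈ Finset.range N, d i * (p j * p i).eval t := by
        funext t
        conv_lhs => rw [hd]
        rw [Polynomial.eval_finset_sum, Finset.mul_sum]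
        refine Finset.sum_congr rfl fun i _ => ?_
        rw [Polynomial.eval_mul, Polynomial.eval_mul, Polynomial.eval_C]
        ring
      rw [e1, integral_finset_sum _ (fun i _ =>
        (integrable_polyeval hmomμ (p j * p i)).const_mul (d i))]
      have e2 : ∀ i ∈ Finset.range N,
          ∫ t, d i * (p j * p i).eval t ∂μ = d i * if j = i then 1 else 0 := by
        intro i _
        rw [integral_const_mul]
        congr 1
        rw [← hportho j i]
        exact integral_congr_ae (ae_of_all _ fun t => by simp [Polynomial.eval_mul])
      rw [Finset.sum_congr rfl e2]
      simp [mul_ite, Finset.sum_ite_eq, hj]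
    conv_rhs => rw [hd]
    rw [map_sum]
    refine Finset.sum_congr rfl fun j hj => ?_
    rw [hcoef j hj, map_mul, Polynomial.aeval_C, Complex.coe_algebraMap]
  -- abbreviations for the kernel-type functions
  set Kz : ℝ → ℂ := S1 N (fun j => (starRingEnd ℂ) (Polynomial.aeval z (p j))) p with hKz
  set F : ℝ → ℂ := S1 N (fun j => Polynomial.aeval ζ (p j)) p with hF
  set G : ℝ → ℂ := S1 N (fun j => Polynomial.aeval ζ (q j)) q with hG
  -- integral computations
  have hKF : ∫ w, Kz w * F w ∂μ
      = ∑ j ∈ Finset.range N,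
          (starRingEnd ℂ) (Polynomial.aeval z (p j)) * Polynomial.aeval ζ (p j) :=
    integral_S1_mul_ortho hmomμ N _ _ p p hportho
  have hKG : ∫ w, Kz w * G w ∂μ
      = ∑ k ∈ Finset.range N,
          (starRingEnd ℂ) (Polynomial.aeval z (q k)) * Polynomial.aeval ζ (q k) := by
    rw [hKz, hG, integral_S1_mul_rep hmomμ]
    refine Finset.sum_congr rfl fun k hk => ?_
    have e3 : (∑ j ∈ Finset.range N,
        ((∫ w, (p j).eval w * (q k).eval w ∂μ : ℝ) : ℂ)
          * (starRingEnd ℂ) (Polynomial.aeval z (p j)))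
        = (starRingEnd ℂ) (Polynomial.aeval z (q k)) := by
      rw [← hrep k hk z, map_sum]
      refine Finset.sum_congr rfl fun j _ => ?_
      rw [map_mul, Complex.conj_ofReal]
    rw [e3]
    ring
  have hFG : ∫ w, F w * (S1 N (fun j => (starRingEnd ℂ) (Polynomial.aeval ζ (q j))) q) w ∂μ
      = ∑ k ∈ Finset.range N,
          ((Polynomial.aeval ζ (q k)) * (starRingEnd ℂ) (Polynomial.aeval ζ (q k))) := by
    rw [hF, integral_S1_mul_rep hmomμ]
    refine Finset.sum_congr rfl fun k hk => ?_
    rw [hrep k hk ζ]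
    ring
  -- norms
  have hKnorm : ∫ w, ‖Kz w‖ ^ 2 ∂μ
      = ∑ j ∈ Finset.range N, ‖Polynomial.aeval z (p j)‖ ^ 2 := by
    rw [hKz, integral_S1_normSq_ortho hmomμ N _ p hportho]
    exact Finset.sum_congr rfl fun j _ => by rw [RCLike.norm_conj]
  have hFnorm : ∫ w, ‖F w‖ ^ 2 ∂μ
      = ∑ j ∈ Finset.range N, ‖Polynomial.aeval ζ (p j)‖ ^ 2 := by
    rw [hF]; exact integral_S1_normSq_ortho hmomμ N _ p hportho
  have hGnorm_star : ∫ w, ‖G w‖ ^ 2 ∂μstar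
      = ∑ j ∈ Finset.range N, ‖Polynomial.aeval ζ (q j)‖ ^ 2 := by
    rw [hG]; exact integral_S1_normSq_ortho hmom N _ q hqortho
  have hGnorm_le : ∫ w, ‖G w‖ ^ 2 ∂μ ≤ ∑ j ∈ Finset.range N, ‖Polynomial.aeval ζ (q j)‖ ^ 2 := by
    rw [← hGnorm_star]
    exact integral_mono_measure hle (ae_of_all _ fun w => by positivity)
      (by rw [hG]; exact integrable_S1_normSq hmom N _ q)
  -- the difference function D = F - G
  have hDnormSq : ∀ w : ℝ, ‖F w - G w‖ ^ 2
      = ‖F w‖ ^ 2 - 2 * (F w * (starRingEnd ℂ) (G w)).re + ‖G w‖ ^ 2 := by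
    intro w
    have : ∀ a b : ℂ, ‖a - b‖ ^ 2 = ‖a‖ ^ 2 - 2 * (a * (starRingEnd ℂ) b).re + ‖b‖ ^ 2 := by
      intro a b
      simp only [Complex.sq_norm, Complex.normSq_apply, Complex.mul_re,
        Complex.sub_re, Complex.sub_im, Complex.conj_re, Complex.conj_im]
      ring
    exact this (F w) (G w)
  have hconjG : ∀ w : ℝ, (starRingEnd ℂ) (G w)
      = S1 N (fun j => (starRingEnd ℂ) (Polynomial.aeval ζ (q j))) q w := by
    intro w; rw [hG, conj_S1]
  have iF2 : Integrable (fun w : ℝ => ‖F w‖ ^ 2) μ := by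
    rw [hF]; exact integrable_S1_normSq hmomμ N _ p
  have iG2 : Integrable (fun w : ℝ => ‖G w‖ ^ 2) μ := by
    rw [hG]; exact integrable_S1_normSq hmomμ N _ q
  have hintFG : Integrable (fun w : ℝ =>
      (F w * (S1 N (fun j => (starRingEnd ℂ) (Polynomial.aeval ζ (q j))) q) w).re) μ := by
    rw [hF]
    exact (integrable_S1_mul hmomμ N _ _ p q).re
  have hDint : ∫ w, ‖F w - G w‖ ^ 2 ∂μ
      = (∫ w, ‖F w‖ ^ 2 ∂μ)
        - 2 * (∫ w, (F w * (S1 N (fun j => (starRingEnd ℂ) (Polynomial.aeval ζ (q j))) q) w).re ∂μ)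
        + ∫ w, ‖G w‖ ^ 2 ∂μ := by
    have e4 : (fun w : ℝ => ‖F w - G w‖ ^ 2)
        = fun w : ℝ => (‖F w‖ ^ 2
            - 2 * (F w * (S1 N (fun j => (starRingEnd ℂ) (Polynomial.aeval ζ (q j))) q) w).re)
            + ‖G w‖ ^ 2 := by
      funext w
      rw [hDnormSq w, hconjG w]
    have iFsub : Integrable (fun w : ℝ => ‖F w‖ ^ 2
        - 2 * (F w * (S1 N (fun j => (starRingEnd ℂ) (Polynomial.aeval ζ (q j))) q) w).re) μ :=
      iF2.sub (hintFG.const_mul 2)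
    rw [e4, integral_add iFsub iG2, integral_sub iF2 (hintFG.const_mul 2), integral_const_mul]
  have hFGre : (∫ w, (F w * (S1 N (fun j => (starRingEnd ℂ) (Polynomial.aeval ζ (q j))) q) w).re ∂μ)
      = ∑ j ∈ Finset.range N, ‖Polynomial.aeval ζ (q j)‖ ^ 2 := by
    have h5 := hintFG
    rw [show (fun w : ℝ =>
        (F w * (S1 N (fun j => (starRingEnd ℂ) (Polynomial.aeval ζ (q j))) q) w).re)
        = fun w : ℝ => RCLike.re
            (F w * (S1 N (fun j => (starRingEnd ℂ) (Polynomial.aeval ζ (q j))) q) w) from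
      funext fun w => (congrFun RCLike.re_eq_complex_re _).symm]
    rw [integral_re (by rw [hF]; exact integrable_S1_mul hmomμ N _ _ p q), hFG,
      congrFun RCLike.re_eq_complex_re _, Complex.re_sum]
    refine Finset.sum_congr rfl fun j _ => ?_
    rw [Complex.mul_conj, Complex.ofReal_re, Complex.normSq_eq_norm_sq]
  have hDbound : ∫ w, ‖F w - G w‖ ^ 2 ∂μ
      ≤ (∑ j ∈ Finset.range N, ‖Polynomial.aeval ζ (p j)‖ ^ 2)
        - ∑ j ∈ Finset.range N, ‖Polynomial.aeval ζ (q j)‖ ^ 2 := by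
    rw [hDint, hFnorm, hFGre]
    linarith [hGnorm_le]
  -- the main identity: S = ∫ Kz (F - G)
  have hS : (∑ j ∈ Finset.range N,
      ((starRingEnd ℂ) (Polynomial.aeval z (p j)) * Polynomial.aeval ζ (p j)
        - (starRingEnd ℂ) (Polynomial.aeval z (q j)) * Polynomial.aeval ζ (q j)))
      = ∫ w, Kz w * (F w - G w) ∂μ := by
    have e5 : (fun w : ℝ => Kz w * (F w - G w))
        = fun w : ℝ => Kz w * F w - Kz w * G w := by
      funext w; ring
    rw [e5, integral_sub (by rw [hKz, hF]; exact integrable_S1_mul hmomμ N _ _ p p)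
      (by rw [hKz, hG]; exact integrable_S1_mul hmomμ N _ _ p q), hKF, hKG,
      ← Finset.sum_sub_distrib]
  -- Cauchy–Schwarz assembly
  have hKD_int : Integrable (fun w : ℝ => Kz w * (F w - G w)) μ := by
    have e5 : (fun w : ℝ => Kz w * (F w - G w))
        = fun w : ℝ => Kz w * F w - Kz w * G w := by
      funext w; ring
    rw [e5]
    exact (by rw [hKz, hF]; exact integrable_S1_mul hmomμ N _ _ p p :
        Integrable (fun w : ℝ => Kz w * F w) μ).sub
      (by rw [hKz, hG]; exact integrable_S1_mul hmomμ N _ _ p q)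
  have habs : ‖∑ j ∈ Finset.range N,
      ((starRingEnd ℂ) (Polynomial.aeval z (p j)) * Polynomial.aeval ζ (p j)
        - (starRingEnd ℂ) (Polynomial.aeval z (q j)) * Polynomial.aeval ζ (q j))‖
      ≤ ∫ w, ‖Kz w‖ * ‖F w - G w‖ ∂μ := by
    rw [hS]
    refine le_trans (norm_integral_le_integral_norm _) (le_of_eq ?_)
    refine integral_congr_ae (ae_of_all _ fun w => ?_)
    show ‖Kz w * (F w - G w)‖ = ‖Kz w‖ * ‖F w - G w‖
    exact norm_mul _ _
  have hDnormSq_int : Integrable (fun w : ℝ => ‖F w - G w‖ ^ 2) μ := by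
    have e4 : (fun w : ℝ => ‖F w - G w‖ ^ 2)
        = fun w : ℝ => (‖F w‖ ^ 2
            - 2 * (F w * (S1 N (fun j => (starRingEnd ℂ) (Polynomial.aeval ζ (q j))) q) w).re)
            + ‖G w‖ ^ 2 := by
      funext w
      rw [hDnormSq w, hconjG w]
    have iFsub : Integrable (fun w : ℝ => ‖F w‖ ^ 2
        - 2 * (F w * (S1 N (fun j => (starRingEnd ℂ) (Polynomial.aeval ζ (q j))) q) w).re) μ :=
      iF2.sub (hintFG.const_mul 2)
    rw [e4]
    exact iFsub.add iG2
  have hCS : (∫ w, ‖Kz w‖ * ‖F w - G w‖ ∂μ) ^ 2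
      ≤ (∫ w, ‖Kz w‖ ^ 2 ∂μ) * ∫ w, ‖F w - G w‖ ^ 2 ∂μ := by
    refine integral_cauchy_schwarz ?_ hDnormSq_int ?_
    · rw [hKz]; exact integrable_S1_normSq hmomμ N _ p
    · refine hKD_int.norm.congr (ae_of_all _ fun w => ?_)
      show ‖Kz w * (F w - G w)‖ = ‖Kz w‖ * ‖F w - G w‖
      exact norm_mul _ _
  have hA_nonneg : 0 ≤ ∑ j ∈ Finset.range N, ‖Polynomial.aeval z (p j)‖ ^ 2 :=
    Finset.sum_nonneg fun j _ => by positivity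
  calc ‖∑ j ∈ Finset.range N,
        ((starRingEnd ℂ) (Polynomial.aeval z (p j)) * Polynomial.aeval ζ (p j)
          - (starRingEnd ℂ) (Polynomial.aeval z (q j)) * Polynomial.aeval ζ (q j))‖ ^ 2
      ≤ (∫ w, ‖Kz w‖ * ‖F w - G w‖ ∂μ) ^ 2 := by
        refine pow_le_pow_left₀ (norm_nonneg _) habs 2
    _ ≤ (∫ w, ‖Kz w‖ ^ 2 ∂μ) * ∫ w, ‖F w - G w‖ ^ 2 ∂μ := hCS
    _ ≤ (∑ j ∈ Finset.range N, ‖Polynomial.aeval z (p j)‖ ^ 2)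
        * ((∑ j ∈ Finset.range N, ‖Polynomial.aeval ζ (p j)‖ ^ 2)
            - ∑ j ∈ Finset.range N, ‖Polynomial.aeval ζ (q j)‖ ^ 2) := by
        rw [hKnorm]
        exact mul_le_mul_of_nonneg_left hDbound hA_nonneg
end
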